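/- arXiv:1411.7944 — 7 statements merged into one kernel-verified Lean document; each statement's English description precedes it below -/
import Mathlib

section
/- Let A_1, …, A_N be real n×n matrices, τ > 0 and m a positive integer. Suppose there exist symmetric positive definite matrices P_{i,r} (i ∈ {1,…,N}, r ∈ {1,…,m}), scalars α_{irs} > 0 and scalars γ_{jqirs} ≥ 0 with Σ_{s=1}^m γ_{jqirs} < 1, such that for all i and r: A_i^T P_{i,r} + P_{i,r} A_i ≺ Σ_{s≠r} α_{irs} (P_{i,s} − P_{i,r}), and for all i ≠ j and all q, r ∈ {1,…,m}: exp(A_i^T τ) P_{j,q} exp(A_i τ) ≺ P_{i,r} + Σ_{s≠r} γ_{jqirs} (P_{i,s} − P_{i,r}). Then the switched linear system is asymptotically stable under every switching signal with dwell time at least τ: for every mode sequence i : ℕ → {1,…,N} with i(k+1) ≠ i(k), every sequence of dwell times δ : ℕ → ℝ with δ_k ≥ τ for all k, and every initial state x_0 ∈ ℝ^n, the trajectory defined by x_{k+1} = exp(δ_k A_{i_k}) x_k converges to 0 along the whole flow, i.e. for every ε > 0 there exists K such that for all k ≥ K and all s ∈ [0, δ_k], ‖exp(s A_{i_k}) x_k‖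 < ε. -/
open Matrix NormedSpace Finset

section Aux

open Set Filter

/-- Local right-decay plus continuity implies global decay on an interval. -/
theorem le_start_of_local_decay {g : ℝ → ℝ} {a b : ℝ}
    (hg : ContinuousOn g (Set.Icc a b))
    (h : ∀ t ∈ Set.Ico a b, ∀ᶠ u in nhdsWithin t (Set.Ioi t), g u ≤ g t) :
    ∀ t ∈ Set.Icc a b, g t ≤ g a := by
  rintro T ⟨haT, hTb⟩
  set S : Set ℝ := {t ∈ Set.Icc a T | ∀ u ∈ Set.Icc a t, g u ≤ g a} with hS
  have haS : a ∈ S := ⟨⟨le_refl a, haT⟩, fun u hu => by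
    have : u = a := le_antisymm hu.2 hu.1
    simp [this]⟩
  have hne : S.Nonempty := ⟨a, haS⟩
  have hbdd : BddAbove S := ⟨T, fun t ht => ht.1.2⟩
  set c := sSup S with hc
  have hac : a ≤ c := le_csSup hbdd haS
  have hcT : c ≤ T := csSup_le hne fun t ht => ht.1.2
  have hcb : c ≤ b := hcT.trans hTb
  have hIco : ∀ u ∈ Set.Ico a c, g u ≤ g a := by
    rintro u ⟨hau, huc⟩
    obtain ⟨t, htS, hut⟩ := exists_lt_of_lt_csSup hne huc
    exact htS.2 u ⟨hau, hut.le⟩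
  have hgc : g c ≤ g a := by
    rcases eq_or_lt_of_le hac with h' | h'
    · simp [← h']
    · have hcw : ContinuousWithinAt g (Set.Ico a c) c :=
        (hg c ⟨hac, hcb⟩).mono (Set.Ico_subset_Icc_self.trans (Set.Icc_subset_Icc_right hcb))
      have hne' : (nhdsWithin c (Set.Ico a c)).NeBot := by
        rw [← mem_closure_iff_nhdsWithin_neBot, closure_Ico h'.ne]
        exact ⟨hac, le_refl c⟩
      exact le_of_tendsto hcw (eventually_nhdsWithin_of_forall hIco)
  have hcS : c ∈ S := ⟨⟨hac, hcT⟩, fun u hu => by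
    rcases lt_or_eq_of_le hu.2 with h' | h'
    · exact hIco u ⟨hu.1, h'⟩
    · simpa [h'] using hgc⟩
  rcases eq_or_lt_of_le hcT with h' | h'
  · have := hcS.2
    rw [h'] at this
    exact this T ⟨haT, le_refl T⟩
  · exfalso
    have hcb' : c < b := lt_of_lt_of_le h' hTb
    have hev := h c ⟨hac, hcb'⟩
    obtain ⟨e, hec, hsub⟩ := mem_nhdsGT_iff_exists_Ioc_subset.1 hev
    set d := min e T with hd
    have hcd : c < d := lt_min hec h'
    have hdS : d ∈ S := by
      refine ⟨⟨hac.trans hcd.le, min_le_right _ _⟩, fun u hu => ?_⟩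
      rcases le_or_gt u c with h'' | h''
      · exact hcS.2 u ⟨hu.1, h''⟩
      · have : u ∈ Set.Ioc c e := ⟨h'', hu.2.trans (min_le_left _ _)⟩
        exact (hsub this).trans hgc
    exact absurd (le_csSup hbdd hdS) (not_le.2 hcd)

/-- Continuity of a finite `sup'` of continuous real functions. -/
theorem continuous_finset_sup'_aux {X ι : Type*} [TopologicalSpace X] {s : Finset ι}
    (hs : s.Nonempty) {f : ι → X → ℝ} (hf : ∀ i, Continuous (f i)) :
    Continuous fun x => s.sup' hs fun i => f i x := by
  induction hs using Finset.Nonempty.cons_induction with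
  | singleton a => simpa using hf a
  | cons a s h hs ih => simpa [Finset.sup'_cons hs] using (hf a).max ih

end Aux

section MatrixAux

/-- The quadratic form of a matrix. -/
noncomputable def quadF {n : ℕ} (P : Matrix (Fin n) (Fin n) ℝ) (y : Fin n → ℝ) : ℝ :=
  y ⬝ᵥ (P *ᵥ y)

theorem continuous_quadF {n : ℕ} (P : Matrix (Fin n) (Fin n) ℝ) : Continuous (quadF P) := by
  unfold quadF
  simp only [dotProduct, Matrix.mulVec]
  exact continuous_finset_sum _ fun i _ => (continuous_apply i).mul
    (continuous_finset_sum _ fun j _ => continuous_const.mul (continuous_apply j))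

theorem quadF_zero {n : ℕ} (P : Matrix (Fin n) (Fin n) ℝ) : quadF P 0 = 0 := by
  simp [quadF]

theorem quadF_smul {n : ℕ} (P : Matrix (Fin n) (Fin n) ℝ) (t : ℝ) (y : Fin n → ℝ) :
    quadF P (t • y) = t ^ 2 * quadF P y := by
  simp [quadF, Matrix.mulVec_smul, dotProduct_smul, smul_dotProduct,
    smul_eq_mul]
  ring

theorem quadF_pos {n : ℕ} {P : Matrix (Fin n) (Fin n) ℝ} (hP : P.PosDef)
    {y : Fin n → ℝ} (hy : y ≠ 0) : 0 < quadF P y := by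
  have := hP.dotProduct_mulVec_pos hy
  simpa [quadF] using this

theorem quadF_nonneg {n : ℕ} {P : Matrix (Fin n) (Fin n) ℝ} (hP : P.PosDef)
    (y : Fin n → ℝ) : 0 ≤ quadF P y := by
  rcases eq_or_ne y 0 with rfl | hy
  · simp [quadF_zero]
  · exact (quadF_pos hP hy).le

theorem dotProduct_sum_mulVec {n : ℕ} {ι : Type*} (s : Finset ι)
    (M : ι → Matrix (Fin n) (Fin n) ℝ) (y : Fin n → ℝ) :
    y ⬝ᵥ ((∑ i ∈ s, M i) *ᵥ y) = ∑ i ∈ s, y ⬝ᵥ (M i *ᵥ y) := by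
  induction s using Finset.cons_induction with
  | empty => simp [Matrix.zero_mulVec]
  | cons a s ha ih => simp [Finset.sum_cons, Matrix.add_mulVec, dotProduct_add, ih]

theorem quad_lower {n : ℕ} (hn : 0 < n) (P : Matrix (Fin n) (Fin n) ℝ) (hP : P.PosDef) :
    ∃ c > 0, ∀ y : Fin n → ℝ, c * ‖y‖ ^ 2 ≤ quadF P y := by
  haveI : Nonempty (Fin n) := ⟨⟨0, hn⟩⟩
  have hsne : (Metric.sphere (0 : Fin n → ℝ) 1).Nonempty := by
    refine ⟨fun _ => 1, ?_⟩
    simp [mem_sphere_iff_norm]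
  obtain ⟨y₀, hy₀s, hy₀min⟩ :=
    (isCompact_sphere (0 : Fin n → ℝ) 1).exists_isMinOn hsne (continuous_quadF P).continuousOn
  have hy₀norm : ‖y₀‖ = 1 := by simpa [mem_sphere_iff_norm] using hy₀s
  have hy₀ne : y₀ ≠ 0 := by
    intro h; rw [h] at hy₀norm; simp at hy₀norm
  refine ⟨quadF P y₀, quadF_pos hP hy₀ne, fun y => ?_⟩
  rcases eq_or_ne y 0 with rfl | hy
  · simp [quadF_zero]
  · have hyn : (0 : ℝ) < ‖y‖ := norm_pos_iff.2 hy
    have hu : ‖y‖⁻¹ • y ∈ Metric.sphere (0 : Fin n → ℝ) 1 := by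
      simp [mem_sphere_iff_norm, norm_smul, abs_of_pos (inv_pos.2 hyn), inv_mul_cancel₀ hyn.ne']
    have hmin := hy₀min hu
    have hrw : quadF P y = ‖y‖ ^ 2 * quadF P (‖y‖⁻¹ • y) := by
      rw [quadF_smul]
      field_simp
    rw [hrw]
    have := mul_le_mul_of_nonneg_left hmin (by positivity : (0:ℝ) ≤ ‖y‖ ^ 2)
    calc quadF P y₀ * ‖y‖ ^ 2 = ‖y‖ ^ 2 * quadF P y₀ := by ring
    _ ≤ ‖y‖ ^ 2 * quadF P (‖y‖⁻¹ • y) := this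

end MatrixAux

section VF

variable {n m : ℕ}

/-- max of the quadratic pieces -/
noncomputable def VF (hm : 0 < m) (P : Fin m → Matrix (Fin n) (Fin n) ℝ)
    (y : Fin n → ℝ) : ℝ :=
  Finset.univ.sup' (by
    haveI : Nonempty (Fin m) := ⟨⟨0, hm⟩⟩
    exact Finset.univ_nonempty) fun r => quadF (P r) y

theorem quadF_le_VF (hm : 0 < m) (P : Fin m → Matrix (Fin n) (Fin n) ℝ)
    (y : Fin n → ℝ) (r : Fin m) : quadF (P r) y ≤ VF hm P y := by
  unfold VF; exact Finset.le_sup' (fun r => quadF (P r) y) (Finset.mem_univ r)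

theorem VF_le (hm : 0 < m) (P : Fin m → Matrix (Fin n) (Fin n) ℝ)
    (y : Fin n → ℝ) {a : ℝ} (h : ∀ r, quadF (P r) y ≤ a) : VF hm P y ≤ a := by
  unfold VF; exact Finset.sup'_le _ _ fun r _ => h r

theorem exists_VF_eq (hm : 0 < m) (P : Fin m → Matrix (Fin n) (Fin n) ℝ)
    (y : Fin n → ℝ) : ∃ r, VF hm P y = quadF (P r) y := by
  unfold VF
  obtain ⟨r, -, hr⟩ := Finset.exists_mem_eq_sup' (α := ℝ)
    (by haveI : Nonempty (Fin m) := ⟨⟨0, hm⟩⟩; exact Finset.univ_nonempty)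
    fun r => quadF (P r) y
  exact ⟨r, hr⟩

theorem continuous_VF (hm : 0 < m) (P : Fin m → Matrix (Fin n) (Fin n) ℝ) :
    Continuous (VF hm P) := by
  unfold VF; exact continuous_finset_sup'_aux _ fun r => continuous_quadF (P r)

theorem VF_smul (hm : 0 < m) (P : Fin m → Matrix (Fin n) (Fin n) ℝ)
    {t : ℝ} (ht : 0 ≤ t) (y : Fin n → ℝ) : VF hm P (t • y) = t ^ 2 * VF hm P y := by
  unfold VF
  rw [Finset.comp_sup'_eq_sup'_comp _ (fun a => t ^ 2 * a)
    (fun a b => mul_max_of_nonneg a b (by positivity))]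
  congr 1
  funext r
  simp [quadF_smul]

theorem VF_nonneg (hm : 0 < m) {P : Fin m → Matrix (Fin n) (Fin n) ℝ}
    (hP : ∀ r, (P r).PosDef) (y : Fin n → ℝ) : 0 ≤ VF hm P y :=
  le_trans (quadF_nonneg (hP ⟨0, hm⟩) y) (quadF_le_VF hm P y ⟨0, hm⟩)

theorem VF_pos (hm : 0 < m) {P : Fin m → Matrix (Fin n) (Fin n) ℝ}
    (hP : ∀ r, (P r).PosDef) {y : Fin n → ℝ} (hy : y ≠ 0) : 0 < VF hm P y :=
  lt_of_lt_of_le (quadF_pos (hP ⟨0, hm⟩) hy) (quadF_le_VF hm P y ⟨0, hm⟩)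

end VF

section Contract

theorem contract_aux {n : ℕ} (hn : 0 < n) (φ V : (Fin n → ℝ) → ℝ)
    (hφc : Continuous φ) (hVc : Continuous V)
    (hφh : ∀ t : ℝ, 0 ≤ t → ∀ x, φ (t • x) = t ^ 2 * φ x)
    (hVh : ∀ t : ℝ, 0 ≤ t → ∀ x, V (t • x) = t ^ 2 * V x)
    (hφnn : ∀ x, 0 ≤ φ x) (hVpos : ∀ x, x ≠ 0 → 0 < V x)
    (hlt : ∀ x, x ≠ 0 → φ x < V x) :
    ∃ ρ, 0 ≤ ρ ∧ ρ < 1 ∧ ∀ x, φ x ≤ ρ * V x := by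
  haveI : Nonempty (Fin n) := ⟨⟨0, hn⟩⟩
  have hsne : (Metric.sphere (0 : Fin n → ℝ) 1).Nonempty := by
    refine ⟨fun _ => 1, ?_⟩
    simp [mem_sphere_iff_norm]
  have hVne : ∀ x ∈ Metric.sphere (0 : Fin n → ℝ) 1, x ≠ 0 := by
    intro x hx h0
    rw [h0] at hx
    simp [mem_sphere_iff_norm] at hx
  obtain ⟨x₀, hx₀s, hx₀max⟩ := (isCompact_sphere (0 : Fin n → ℝ) 1).exists_isMaxOn hsne
    ((hφc.continuousOn (s := Metric.sphere 0 1)).div hVc.continuousOn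
      (fun x hx => (hVpos x (hVne x hx)).ne'))
  set ρ := φ x₀ / V x₀ with hρ
  have hV₀ : 0 < V x₀ := hVpos x₀ (hVne x₀ hx₀s)
  refine ⟨ρ, div_nonneg (hφnn x₀) hV₀.le, (div_lt_one hV₀).2 (hlt x₀ (hVne x₀ hx₀s)), ?_⟩
  have hsph : ∀ x ∈ Metric.sphere (0 : Fin n → ℝ) 1, φ x ≤ ρ * V x := by
    intro x hx
    have h1 : φ x / V x ≤ ρ := hx₀max hx
    have h2 : 0 < V x := hVpos x (hVne x hx)
    calc φ x = φ x / V x * V x := by field_simp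
    _ ≤ ρ * V x := mul_le_mul_of_nonneg_right h1 h2.le
  intro x
  rcases eq_or_ne x 0 with rfl | hx
  · have h0 : φ 0 = 0 := by
      have := hφh 0 le_rfl 0
      simpa using this
    have h0' : V 0 = 0 := by
      have := hVh 0 le_rfl 0
      simpa using this
    simp [h0, h0']
  · have hyn : (0 : ℝ) < ‖x‖ := norm_pos_iff.2 hx
    have hu : ‖x‖⁻¹ • x ∈ Metric.sphere (0 : Fin n → ℝ) 1 := by
      simp [mem_sphere_iff_norm, norm_smul, abs_of_pos (inv_pos.2 hyn), inv_mul_cancel₀ hyn.ne']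
    have hx' : x = ‖x‖ • (‖x‖⁻¹ • x) := by
      rw [smul_smul, mul_inv_cancel₀ hyn.ne', one_smul]
    have := hsph _ hu
    calc φ x = ‖x‖ ^ 2 * φ (‖x‖⁻¹ • x) := by rw [← hφh _ hyn.le, ← hx']
    _ ≤ ‖x‖ ^ 2 * (ρ * V (‖x‖⁻¹ • x)) := by
        exact mul_le_mul_of_nonneg_left this (by positivity)
    _ = ρ * (‖x‖ ^ 2 * V (‖x‖⁻¹ • x)) := by ring
    _ = ρ * V x := by rw [← hVh _ hyn.le, ← hx']

end Contract

section Flow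

attribute [local instance] Matrix.linftyOpNormedRing Matrix.linftyOpNormedAlgebra

theorem hasDerivAt_expflow {n : ℕ} (A : Matrix (Fin n) (Fin n) ℝ) (x : Fin n → ℝ) (t : ℝ) :
    HasDerivAt (fun s : ℝ => exp (s • A) *ᵥ x) (A *ᵥ (exp (t • A) *ᵥ x)) t := by
  have h := hasDerivAt_exp_smul_const' (𝕂 := ℝ) A t
  let L : Matrix (Fin n) (Fin n) ℝ →L[ℝ] (Fin n → ℝ) :=
    LinearMap.toContinuousLinearMap
      { toFun := fun M => M *ᵥ x
        map_add' := fun M N => Matrix.add_mulVec M N x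
        map_smul' := fun c M => Matrix.smul_mulVec c M x }
  have h2 := L.hasFDerivAt.comp_hasDerivAt t h
  have h3 : HasDerivAt (fun s : ℝ => exp (s • A) *ᵥ x) ((A * exp (t • A)) *ᵥ x) t := h2
  simpa [Matrix.mulVec_mulVec] using h3

theorem hasDerivAt_quad {n : ℕ} (P : Matrix (Fin n) (Fin n) ℝ) {y : ℝ → Fin n → ℝ}
    {v : Fin n → ℝ} {t : ℝ} (hy : HasDerivAt y v t) :
    HasDerivAt (fun s => quadF P (y s)) (v ⬝ᵥ (P *ᵥ y t) + y t ⬝ᵥ (P *ᵥ v)) t := by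
  have hyi : ∀ i, HasDerivAt (fun s => y s i) (v i) t := fun i => hasDerivAt_pi.1 hy i
  have hin : ∀ i, HasDerivAt (fun s => ∑ j, P i j * y s j) (∑ j, P i j * v j) t :=
    fun i => HasDerivAt.fun_sum fun j _ => (hyi j).const_mul _
  have main : HasDerivAt (fun s => ∑ i, y s i * ∑ j, P i j * y s j)
      (∑ i, (v i * ∑ j, P i j * y t j + y t i * ∑ j, P i j * v j)) t :=
    HasDerivAt.fun_sum fun i _ => (hyi i).mul (hin i)
  have e1 : (fun s => quadF P (y s)) = fun s => ∑ i, y s i * ∑ j, P i j * y s j := by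
    funext s; simp [quadF, dotProduct, Matrix.mulVec]
  have e2 : v ⬝ᵥ (P *ᵥ y t) + y t ⬝ᵥ (P *ᵥ v)
      = ∑ i, (v i * ∑ j, P i j * y t j + y t i * ∑ j, P i j * v j) := by
    simp [dotProduct, Matrix.mulVec, Finset.sum_add_distrib]
  rw [e1, e2]; exact main

/-- The key flow monotonicity: if at every nonzero point the "active" quadratic pieces
have negative derivative, then the max of the pieces is non-increasing along the flow. -/
theorem flow_mono {n m : ℕ} (hm : 0 < m) (A : Matrix (Fin n) (Fin n) ℝ)
    (P : Fin m → Matrix (Fin n) (Fin n) ℝ)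
    (hkey : ∀ (r : Fin m) (y : Fin n → ℝ), y ≠ 0 →
      (∀ s, quadF (P s) y ≤ quadF (P r) y) →
      (A *ᵥ y) ⬝ᵥ (P r *ᵥ y) + y ⬝ᵥ (P r *ᵥ (A *ᵥ y)) < 0)
    (x : Fin n → ℝ) {b s : ℝ} (hs : s ∈ Set.Icc 0 b) :
    VF hm P (exp (s • A) *ᵥ x) ≤ VF hm P x := by
  rcases eq_or_ne x 0 with rfl | hx
  · simp [Matrix.mulVec_zero]
  have hx0 : ∀ t : ℝ, exp (t • A) *ᵥ x ≠ 0 := by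
    intro t h0
    apply hx
    have hcomm : Commute ((-t) • A) (t • A) := ((Commute.refl A).smul_right t).smul_left (-t)
    have hinv : exp ((-t) • A) * exp (t • A) = 1 := by
      rw [← Matrix.exp_add_of_commute _ _ hcomm]
      have : (-t) • A + t • A = (0 : Matrix (Fin n) (Fin n) ℝ) := by
        rw [← add_smul]; simp
      rw [this, exp_zero]
    calc x = (exp ((-t) • A) * exp (t • A)) *ᵥ x := by rw [hinv, Matrix.one_mulVec]
    _ = exp ((-t) • A) *ᵥ (exp (t • A) *ᵥ x) := by rw [← Matrix.mulVec_mulVec]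
    _ = 0 := by rw [h0, Matrix.mulVec_zero]
  set y : ℝ → Fin n → ℝ := fun t => exp (t • A) *ᵥ x with hy
  have hycont : Continuous y := by
    rw [continuous_iff_continuousAt]
    exact fun t => (hasDerivAt_expflow A x t).continuousAt
  set g : ℝ → ℝ := fun t => VF hm P (y t) with hg
  have hgc : Continuous g := (continuous_VF hm P).comp hycont
  have hdecay : ∀ t ∈ Set.Ico (0 : ℝ) b, ∀ᶠ u in nhdsWithin t (Set.Ioi t), g u ≤ g t := by
    intro t _
    have hev : ∀ r : Fin m, ∀ᶠ u in nhdsWithin t (Set.Ioi t), quadF (P r) (y u) ≤ g t := by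
      intro r
      rcases eq_or_lt_of_le (quadF_le_VF hm P (y t) r) with heq | hlt
      · -- active piece : strict negative derivative
        have hd : HasDerivAt (fun u => quadF (P r) (y u))
            ((A *ᵥ y t) ⬝ᵥ (P r *ᵥ y t) + y t ⬝ᵥ (P r *ᵥ (A *ᵥ y t))) t :=
          hasDerivAt_quad (P r) (hasDerivAt_expflow A x t)
        have hmax : ∀ s, quadF (P s) (y t) ≤ quadF (P r) (y t) := by
          intro s
          exact le_of_le_of_eq (quadF_le_VF hm P (y t) s) heq.symm
        have hneg := hkey r (y t) (hx0 t) hmax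
        have hslope := hasDerivAt_iff_tendsto_slope.1 hd
        have hslope' : ∀ᶠ u in nhdsWithin t (Set.Ioi t),
            slope (fun u => quadF (P r) (y u)) t u < 0 := by
          have h1 : nhdsWithin t (Set.Ioi t) ≤ nhdsWithin t {t}ᶜ :=
            nhdsWithin_mono t fun u hu => ne_of_gt hu
          exact (hslope.mono_left h1).eventually_lt_const hneg
        refine (hslope'.and self_mem_nhdsWithin).mono ?_
        rintro u ⟨hsl, hu⟩
        have hut : (0:ℝ) < u - t := sub_pos.2 hu
        rw [slope_def_field] at hsl
        have hneg2 := mul_neg_of_neg_of_pos hsl hut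
        rw [div_mul_cancel₀ _ hut.ne'] at hneg2
        show quadF (P r) (y u) ≤ VF hm P (y t)
        linarith
      · -- inactive piece : continuity
        have : ∀ᶠ u in nhds t, quadF (P r) (y u) < g t :=
          (((continuous_quadF (P r)).comp hycont).continuousAt).eventually_lt
            continuousAt_const hlt
        exact (this.filter_mono nhdsWithin_le_nhds).mono fun u hu => hu.le
    have := (Filter.eventually_all (ι := Fin m)).2 hev
    exact this.mono fun u hu => VF_le hm P (y u) hu
  have := le_start_of_local_decay (hgc.continuousOn) hdecay s hs
  simpa [hg, hy, zero_smul, exp_zero, Matrix.one_mulVec] using this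

end Flow

/-- Theorem 2 of the paper: the BMI conditions with `m` piece-wise
quadratic pieces imply asymptotic stability of the switched linear system under every
switching signal with dwell time at least `τ`. -/
theorem bmi_conditions_imply_dwell_time_stability
    (n N m : ℕ) (hm : 0 < m) (A : Fin N → Matrix (Fin n) (Fin n) ℝ) (τ : ℝ) (hτ : 0 < τ)
    (P : Fin N → Fin m → Matrix (Fin n) (Fin n) ℝ)
    (α : Fin N → Fin m → Fin m → ℝ)
    (γ : Fin N → Fin m → Fin N → Fin m → Fin m → ℝ)
    (hPsymm : ∀ i r, (P i r).IsSymm)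
    (hPpos : ∀ i r, (P i r).PosDef)
    (hα : ∀ i r s, 0 < α i r s)
    (hγ : ∀ j q i r s, 0 ≤ γ j q i r s)
    (hγsum : ∀ j q i r, ∑ s, γ j q i r s < 1)
    (hder : ∀ i r,
      ((∑ s ∈ Finset.univ.erase r, α i r s • (P i s - P i r)) -
        ((A i)ᵀ * P i r + P i r * A i)).PosDef)
    (hjump : ∀ i j, i ≠ j → ∀ q r,
      ((P i r + ∑ s ∈ Finset.univ.erase r, γ j q i r s • (P i s - P i r)) -
        (exp (τ • (A i)ᵀ) * P j q * exp (τ • A i))).PosDef) :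
    ∀ (σ : ℕ → Fin N), (∀ k, σ (k + 1) ≠ σ k) →
    ∀ (δ : ℕ → ℝ), (∀ k, τ ≤ δ k) →
    ∀ (x : ℕ → Fin n → ℝ), (∀ k, x (k + 1) = exp (δ k • A (σ k)) *ᵥ x k) →
    ∀ ε > (0 : ℝ), ∃ K : ℕ, ∀ k ≥ K, ∀ s ∈ Set.Icc (0 : ℝ) (δ k),
      ‖exp (s • A (σ k)) *ᵥ x k‖ < ε := by
  intro σ hσ δ hδ x hx ε hε
  rcases Nat.eq_zero_or_pos n with hn | hn
  · subst hn
    refine ⟨0, fun k _ s _ => ?_⟩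
    have h0 : (exp (s • A (σ k)) *ᵥ x k) = 0 := Subsingleton.elim _ _
    rw [h0, norm_zero]; exact hε
  haveI : Nonempty (Fin N) := ⟨σ 0⟩
  haveI : Nonempty (Fin m) := ⟨⟨0, hm⟩⟩
  -- uniform lower bound on the quadratic forms
  have hcex : ∀ p : Fin N × Fin m, ∃ c > 0, ∀ y, c * ‖y‖ ^ 2 ≤ quadF (P p.1 p.2) y :=
    fun p => quad_lower hn _ (hPpos p.1 p.2)
  choose cf hcf hcfle using hcex
  have hPne : (Finset.univ : Finset (Fin N × Fin m)).Nonempty := Finset.univ_nonempty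
  set c := Finset.univ.inf' hPne cf with hc
  have hcpos : 0 < c := (Finset.lt_inf'_iff hPne).2 fun p _ => hcf p
  have hcle : ∀ i r y, c * ‖y‖ ^ 2 ≤ quadF (P i r) y := fun i r y =>
    le_trans (mul_le_mul_of_nonneg_right (Finset.inf'_le cf (Finset.mem_univ (i, r)))
      (by positivity)) (hcfle (i, r) y)
  -- the key derivative inequality
  have hkey : ∀ (i : Fin N) (r : Fin m) (y : Fin n → ℝ), y ≠ 0 →
      (∀ s, quadF (P i s) y ≤ quadF (P i r) y) →
      (A i *ᵥ y) ⬝ᵥ (P i r *ᵥ y) + y ⬝ᵥ (P i r *ᵥ (A i *ᵥ y)) < 0 := by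
    intro i r y hy hmax
    have h0 := (hder i r).dotProduct_mulVec_pos hy
    rw [star_trivial, Matrix.sub_mulVec, dotProduct_sub, dotProduct_sum_mulVec,
        Matrix.add_mulVec, dotProduct_add] at h0
    have e1 : y ⬝ᵥ (((A i)ᵀ * P i r) *ᵥ y) = (A i *ᵥ y) ⬝ᵥ (P i r *ᵥ y) := by
      rw [← Matrix.mulVec_mulVec, dotProduct_mulVec y, Matrix.vecMul_transpose]
    have e2 : y ⬝ᵥ ((P i r * A i) *ᵥ y) = y ⬝ᵥ (P i r *ᵥ (A i *ᵥ y)) := by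
      rw [← Matrix.mulVec_mulVec]
    rw [e1, e2] at h0
    have hsum : ∑ s ∈ Finset.univ.erase r, y ⬝ᵥ ((α i r s • (P i s - P i r)) *ᵥ y) ≤ 0 := by
      apply Finset.sum_nonpos
      intro s _
      have e3 : y ⬝ᵥ ((α i r s • (P i s - P i r)) *ᵥ y)
          = α i r s * (quadF (P i s) y - quadF (P i r) y) := by
        rw [Matrix.smul_mulVec, dotProduct_smul, Matrix.sub_mulVec,
          dotProduct_sub]
        simp [quadF, smul_eq_mul]
      rw [e3]
      exact mul_nonpos_of_nonneg_of_nonpos (hα i r s).le (sub_nonpos.2 (hmax s))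
    linarith
  -- strict decrease at switching instants
  have hjumplt : ∀ i j : Fin N, i ≠ j → ∀ z : Fin n → ℝ, z ≠ 0 →
      VF hm (P j) (exp (τ • A i) *ᵥ z) < VF hm (P i) z := by
    intro i j hij z hz
    obtain ⟨r, hr⟩ := exists_VF_eq hm (P i) z
    obtain ⟨q, hq⟩ := exists_VF_eq hm (P j) (exp (τ • A i) *ᵥ z)
    have h0 := (hjump i j hij q r).dotProduct_mulVec_pos hz
    rw [star_trivial, Matrix.sub_mulVec, dotProduct_sub, Matrix.add_mulVec,
      dotProduct_add, dotProduct_sum_mulVec] at h0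
    have hE : exp (τ • (A i)ᵀ) = (exp (τ • A i))ᵀ := by
      rw [← Matrix.transpose_smul, Matrix.exp_transpose]
    have e4 : z ⬝ᵥ ((exp (τ • (A i)ᵀ) * P j q * exp (τ • A i)) *ᵥ z)
        = quadF (P j q) (exp (τ • A i) *ᵥ z) := by
      rw [hE, mul_assoc, ← Matrix.mulVec_mulVec, ← Matrix.mulVec_mulVec,
        dotProduct_mulVec z, Matrix.vecMul_transpose]
      rfl
    rw [e4] at h0
    have hsum : ∑ s ∈ Finset.univ.erase r, z ⬝ᵥ ((γ j q i r s • (P i s - P i r)) *ᵥ z) ≤ 0 := by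
      apply Finset.sum_nonpos
      intro s _
      have e5 : z ⬝ᵥ ((γ j q i r s • (P i s - P i r)) *ᵥ z)
          = γ j q i r s * (quadF (P i s) z - quadF (P i r) z) := by
        rw [Matrix.smul_mulVec, dotProduct_smul, Matrix.sub_mulVec,
          dotProduct_sub]
        simp [quadF, smul_eq_mul]
      rw [e5]
      refine mul_nonpos_of_nonneg_of_nonpos (hγ j q i r s) (sub_nonpos.2 ?_)
      rw [← hr]
      exact quadF_le_VF hm (P i) z s
    have hzPz : z ⬝ᵥ (P i r *ᵥ z) = quadF (P i r) z := rfl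
    rw [hq, hr]
    have : quadF (P j q) (exp (τ • A i) *ᵥ z) < z ⬝ᵥ (P i r *ᵥ z) := by linarith
    exact this
  -- contraction factors
  have hpair : ∀ i j : Fin N, ∃ ρ, 0 ≤ ρ ∧ ρ < 1 ∧ (i ≠ j → ∀ z,
      VF hm (P j) (exp (τ • A i) *ᵥ z) ≤ ρ * VF hm (P i) z) := by
    intro i j
    by_cases hij : i = j
    · exact ⟨0, le_rfl, zero_lt_one, fun h => absurd hij h⟩
    · have hEc : Continuous fun z : Fin n → ℝ => exp (τ • A i) *ᵥ z := by
        have := (Matrix.mulVecLin (exp (τ • A i))).continuous_of_finiteDimensional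
        exact this
      obtain ⟨ρ, h0, h1, hb⟩ := contract_aux hn
        (fun z => VF hm (P j) (exp (τ • A i) *ᵥ z)) (VF hm (P i))
        ((continuous_VF hm (P j)).comp hEc) (continuous_VF hm (P i))
        (fun t ht z => by show VF hm (P j) (exp (τ • A i) *ᵥ (t • z)) = _; rw [Matrix.mulVec_smul, VF_smul hm (P j) ht])
        (fun t ht z => VF_smul hm (P i) ht z)
        (fun z => VF_nonneg hm (hPpos j) _)
        (fun z hz => VF_pos hm (hPpos i) hz)
        (fun z hz => hjumplt i j hij z hz)
      exact ⟨ρ, h0, h1, fun _ => hb⟩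
  choose ρf hρ0 hρ1 hρb using hpair
  have hPRne : (Finset.univ : Finset (Fin N × Fin N)).Nonempty := Finset.univ_nonempty
  set ρ : ℝ := Finset.univ.sup' hPRne (fun p => ρf p.1 p.2) with hρdef
  have hρub : ∀ i j, ρf i j ≤ ρ := fun i j =>
    Finset.le_sup' (f := fun p : Fin N × Fin N => ρf p.1 p.2) (Finset.mem_univ (i, j))
  have hρnn : 0 ≤ ρ := le_trans (hρ0 (σ 0) (σ 0)) (hρub _ _)
  have hρlt : ρ < 1 := (Finset.sup'_lt_iff hPRne).2 fun p _ => hρ1 p.1 p.2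
  -- the discrete Lyapunov sequence
  set v : ℕ → ℝ := fun k => VF hm (P (σ k)) (x k) with hv
  have hflow : ∀ (i : Fin N) (z : Fin n → ℝ) (b s : ℝ), s ∈ Set.Icc 0 b →
      VF hm (P i) (exp (s • A i) *ᵥ z) ≤ VF hm (P i) z :=
    fun i z b s hs => flow_mono hm (A i) (P i) (hkey i) z hs
  have hstep : ∀ k, v (k + 1) ≤ ρ * v k := by
    intro k
    have hcomm : Commute (τ • A (σ k)) ((δ k - τ) • A (σ k)) :=
      ((Commute.refl (A (σ k))).smul_right _).smul_left _
    have hsplit : x (k + 1) = exp (τ • A (σ k)) *ᵥ (exp ((δ k - τ) • A (σ k)) *ᵥ x k) := by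
      rw [hx k, Matrix.mulVec_mulVec, ← Matrix.exp_add_of_commute _ _ hcomm, ← add_smul]
      norm_num
    set z := exp ((δ k - τ) • A (σ k)) *ᵥ x k with hz
    calc v (k + 1) = VF hm (P (σ (k + 1))) (exp (τ • A (σ k)) *ᵥ z) := by
          rw [hv]; simp only; rw [hsplit]
    _ ≤ ρf (σ k) (σ (k + 1)) * VF hm (P (σ k)) z := hρb _ _ (hσ k).symm z
    _ ≤ ρ * VF hm (P (σ k)) z :=
        mul_le_mul_of_nonneg_right (hρub _ _) (VF_nonneg hm (hPpos _) z)
    _ ≤ ρ * v k := mul_le_mul_of_nonneg_left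
        (hflow (σ k) (x k) (δ k - τ) (δ k - τ) ⟨sub_nonneg.2 (hδ k), le_refl _⟩) hρnn
  have hvnn : ∀ k, 0 ≤ v k := fun k => VF_nonneg hm (hPpos _) _
  have hvk : ∀ k, v k ≤ ρ ^ k * v 0 := by
    intro k
    induction k with
    | zero => simp
    | succ k ih =>
      calc v (k + 1) ≤ ρ * v k := hstep k
      _ ≤ ρ * (ρ ^ k * v 0) := mul_le_mul_of_nonneg_left ih hρnn
      _ = ρ ^ (k + 1) * v 0 := by ring
  -- choose K
  have htend : Filter.Tendsto (fun k => ρ ^ k * v 0) Filter.atTop (nhds 0) := by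
    have := (tendsto_pow_atTop_nhds_zero_of_lt_one hρnn hρlt).mul_const (v 0)
    simpa using this
  have hev : ∀ᶠ k in Filter.atTop, ρ ^ k * v 0 < c * ε ^ 2 :=
    htend.eventually_lt_const (by positivity)
  obtain ⟨K, hK⟩ := Filter.eventually_atTop.1 hev
  refine ⟨K, fun k hk s hs => ?_⟩
  have hVb : VF hm (P (σ k)) (exp (s • A (σ k)) *ᵥ x k) ≤ v k :=
    hflow (σ k) (x k) (δ k) s hs
  have h1 : c * ‖exp (s • A (σ k)) *ᵥ x k‖ ^ 2 ≤ v k :=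
    le_trans (le_trans (hcle (σ k) ⟨0, hm⟩ _) (quadF_le_VF hm (P (σ k)) _ ⟨0, hm⟩)) hVb
  have h2 : v k ≤ ρ ^ K * v 0 := by
    calc v k ≤ ρ ^ k * v 0 := hvk k
    _ ≤ ρ ^ K * v 0 := mul_le_mul_of_nonneg_right
        (pow_le_pow_of_le_one hρnn hρlt.le hk) (hvnn 0)
  have h3 : c * ‖exp (s • A (σ k)) *ᵥ x k‖ ^ 2 < c * ε ^ 2 :=
    lt_of_le_of_lt (le_trans h1 h2) (hK K le_rfl)
  have h4 : ‖exp (s • A (σ k)) *ᵥ x k‖ ^ 2 < ε ^ 2 := (mul_lt_mul_iff_right₀ hcpos).1 h3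
  exact lt_of_pow_lt_pow_left₀ 2 hε.le h4
end

section
/- Let A_1, …, A_N be real n×n matrices and τ > 0. Suppose there exist symmetric positive definite matrices P_i (i ∈ {1,…,N}) such that A_i^T P_i + P_i A_i ≺ 0 for all i, and exp(A_i^T τ) P_j exp(A_i τ) ≺ P_i for all i ≠ j. Then for every mode sequence i : ℕ → {1,…,N} with i(k+1) ≠ i(k), every sequence of dwell times δ : ℕ → ℝ with δ_k ≥ τ for all k, and every initial state x_0 ∈ ℝ^n, the trajectory defined by x_{k+1} = exp(δ_k A_{i_k}) x_k converges to 0 along the whole flow, i.e. for every ε > 0 there exists K such that for all k ≥ K and all s ∈ [0, δ_k], ‖exp(s A_{i_k}) x_k‖ < ε. -/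
open Matrix NormedSpace

attribute [local instance] Matrix.linftyOpNormedAddCommGroup Matrix.linftyOpNormedRing
  Matrix.linftyOpNormedAlgebra

-- transpose trick
lemma dot_transpose {n : ℕ} (M : Matrix (Fin n) (Fin n) ℝ) (v w : Fin n → ℝ) :
    v ⬝ᵥ (Mᵀ *ᵥ w) = (M *ᵥ v) ⬝ᵥ w := by
  rw [Matrix.dotProduct_mulVec, Matrix.vecMul_transpose]

-- quadratic homogeneity
lemma quad_smul {n : ℕ} (M : Matrix (Fin n) (Fin n) ℝ) (c : ℝ) (y : Fin n → ℝ) :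
    (c • y) ⬝ᵥ (M *ᵥ (c • y)) = c * c * (y ⬝ᵥ (M *ᵥ y)) := by
  rw [Matrix.mulVec_smul, smul_dotProduct, dotProduct_smul]
  simp [smul_eq_mul]; ring

lemma dotProduct_self_nonneg {n : ℕ} (y : Fin n → ℝ) : 0 ≤ y ⬝ᵥ y :=
  Finset.sum_nonneg fun i _ => mul_self_nonneg _

lemma quad_cont {n : ℕ} (M : Matrix (Fin n) (Fin n) ℝ) :
    Continuous fun y : Fin n → ℝ => y ⬝ᵥ (M *ᵥ y) :=
  continuous_id.dotProduct (continuous_const.matrix_mulVec continuous_id)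


lemma sphere_compact {n : ℕ} : IsCompact {y : Fin n → ℝ | y ⬝ᵥ y = 1} := by
  apply Metric.isCompact_of_isClosed_isBounded
  · exact isClosed_eq (continuous_id.dotProduct continuous_id) continuous_const
  · apply Bornology.IsBounded.subset (Metric.isBounded_closedBall (x := (0 : Fin n → ℝ)) (r := 1))
    intro y hy
    simp only [Set.mem_setOf_eq] at hy
    simp only [Metric.mem_closedBall, dist_zero_right]
    refine pi_norm_le_iff_of_nonneg zero_le_one |>.mpr fun i => ?_
    rw [Real.norm_eq_abs, ← Real.sqrt_one, ← Real.sqrt_sq_eq_abs]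
    apply Real.sqrt_le_sqrt
    rw [← hy, sq]
    exact Finset.single_le_sum (f := fun j => y j * y j)
      (fun j _ => mul_self_nonneg _) (Finset.mem_univ i)

lemma sphere_nonempty {n : ℕ} (hn : 0 < n) : {y : Fin n → ℝ | y ⬝ᵥ y = 1}.Nonempty := by
  refine ⟨Pi.single ⟨0, hn⟩ 1, ?_⟩
  simp [dotProduct, Pi.single_apply, Finset.sum_ite_eq']

lemma quad_lower_s1 {n : ℕ} (hn : 0 < n) (M : Matrix (Fin n) (Fin n) ℝ) (hM : M.PosDef) :
    ∃ a > 0, ∀ y : Fin n → ℝ, a * (y ⬝ᵥ y) ≤ y ⬝ᵥ (M *ᵥ y) := by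
  obtain ⟨u, hu, hmin⟩ :=
    sphere_compact.exists_isMinOn (sphere_nonempty hn) (quad_cont M).continuousOn
  simp only [Set.mem_setOf_eq] at hu
  have hune : u ≠ 0 := by rintro rfl; simp at hu
  have ha : 0 < u ⬝ᵥ (M *ᵥ u) := by simpa using hM.re_dotProduct_pos hune
  refine ⟨_, ha, fun y => ?_⟩
  by_cases hy : y = 0
  · simp [hy]
  · have hd0 : 0 < y ⬝ᵥ y :=
      (dotProduct_self_nonneg y).lt_of_ne' fun h => hy (dotProduct_self_eq_zero.mp h)
    set t := Real.sqrt (y ⬝ᵥ y) with htdef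
    have ht : 0 < t := Real.sqrt_pos.mpr hd0
    have hyy : y ⬝ᵥ y = t * t := (Real.mul_self_sqrt hd0.le).symm
    have hmem : (t⁻¹ • y) ∈ {z : Fin n → ℝ | z ⬝ᵥ z = 1} := by
      have hq := quad_smul 1 t⁻¹ y
      simp only [Matrix.one_mulVec] at hq
      simp only [Set.mem_setOf_eq, hq, hyy]
      field_simp
    have key := isMinOn_iff.mp hmin _ hmem
    rw [quad_smul M t⁻¹ y] at key
    have hrw : (t⁻¹ * t⁻¹ * (y ⬝ᵥ (M *ᵥ y))) * (t * t) = y ⬝ᵥ (M *ᵥ y) := by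
      field_simp
    have := mul_le_mul_of_nonneg_right key (mul_pos ht ht).le
    rw [hrw] at this
    rw [hyy]; linarith

lemma quad_upper {n : ℕ} (hn : 0 < n) (M : Matrix (Fin n) (Fin n) ℝ) :
    ∃ C > 0, ∀ y : Fin n → ℝ, y ⬝ᵥ (M *ᵥ y) ≤ C * (y ⬝ᵥ y) := by
  obtain ⟨u, hu, hmax⟩ :=
    sphere_compact.exists_isMaxOn (sphere_nonempty hn) (quad_cont M).continuousOn
  refine ⟨max (u ⬝ᵥ (M *ᵥ u)) 1, lt_max_of_lt_right one_pos, fun y => ?_⟩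
  by_cases hy : y = 0
  · simp [hy]
  · have hd0 : 0 < y ⬝ᵥ y :=
      (dotProduct_self_nonneg y).lt_of_ne' fun h => hy (dotProduct_self_eq_zero.mp h)
    set t := Real.sqrt (y ⬝ᵥ y) with htdef
    have ht : 0 < t := Real.sqrt_pos.mpr hd0
    have hyy : y ⬝ᵥ y = t * t := (Real.mul_self_sqrt hd0.le).symm
    have hmem : (t⁻¹ • y) ∈ {z : Fin n → ℝ | z ⬝ᵥ z = 1} := by
      have hq := quad_smul 1 t⁻¹ y
      simp only [Matrix.one_mulVec] at hq
      simp only [Set.mem_setOf_eq, hq, hyy]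
      field_simp
    have key := (isMaxOn_iff.mp hmax _ hmem).trans (le_max_left (u ⬝ᵥ (M *ᵥ u)) (1:ℝ))
    rw [quad_smul M t⁻¹ y] at key
    have hrw : (t⁻¹ * t⁻¹ * (y ⬝ᵥ (M *ᵥ y))) * (t * t) = y ⬝ᵥ (M *ᵥ y) := by
      field_simp
    have := mul_le_mul_of_nonneg_right key (mul_pos ht ht).le
    rw [hrw] at this
    rw [hyy]
    calc y ⬝ᵥ (M *ᵥ y) ≤ max (u ⬝ᵥ (M *ᵥ u)) 1 * (t * t) := this
    _ = _ := rfl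

lemma flow_antitone {n : ℕ} (A₀ P₀ : Matrix (Fin n) (Fin n) ℝ)
    (hQ : (-(A₀ᵀ * P₀ + P₀ * A₀)).PosDef) (v : Fin n → ℝ) :
    Antitone fun s : ℝ => (exp (s • A₀) *ᵥ v) ⬝ᵥ (P₀ *ᵥ (exp (s • A₀) *ᵥ v)) := by
  let L : Matrix (Fin n) (Fin n) ℝ →ₗ[ℝ] ℝ :=
    { toFun := fun M => v ⬝ᵥ (M *ᵥ v)
      map_add' := fun M N => by simp [Matrix.add_mulVec, dotProduct_add]
      map_smul' := fun c M => by simp [Matrix.smul_mulVec, dotProduct_smul] }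
  let Lc := LinearMap.toContinuousLinearMap L
  have hF : ∀ s : ℝ, HasDerivAt (fun s : ℝ => exp (s • A₀ᵀ) * P₀ * exp (s • A₀))
      (A₀ᵀ * exp (s • A₀ᵀ) * P₀ * exp (s • A₀) +
        exp (s • A₀ᵀ) * P₀ * (exp (s • A₀) * A₀)) s := by
    intro s
    have h1 : HasDerivAt (fun s : ℝ => exp (s • A₀ᵀ)) (A₀ᵀ * exp (s • A₀ᵀ)) s :=
      hasDerivAt_exp_smul_const' _ _
    have h2 : HasDerivAt (fun s : ℝ => exp (s • A₀)) (exp (s • A₀) * A₀) s :=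
      hasDerivAt_exp_smul_const _ _
    exact (h1.mul_const P₀).mul h2
  have hfun : (fun s : ℝ => (exp (s • A₀) *ᵥ v) ⬝ᵥ (P₀ *ᵥ (exp (s • A₀) *ᵥ v)))
      = fun s : ℝ => Lc (exp (s • A₀ᵀ) * P₀ * exp (s • A₀)) := by
    funext s
    have ht : exp (s • A₀ᵀ) = (exp (s • A₀))ᵀ := by
      rw [← Matrix.transpose_smul, Matrix.exp_transpose]
    show _ = v ⬝ᵥ ((exp (s • A₀ᵀ) * P₀ * exp (s • A₀)) *ᵥ v)
    rw [ht, Matrix.mul_assoc, ← Matrix.mulVec_mulVec, dot_transpose, Matrix.mulVec_mulVec]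
  rw [hfun]
  have hderiv : ∀ s : ℝ, HasDerivAt (fun s : ℝ => Lc (exp (s • A₀ᵀ) * P₀ * exp (s • A₀)))
      (Lc (A₀ᵀ * exp (s • A₀ᵀ) * P₀ * exp (s • A₀) +
        exp (s • A₀ᵀ) * P₀ * (exp (s • A₀) * A₀))) s :=
    fun s => (Lc.hasFDerivAt.comp_hasDerivAt s (hF s))
  apply antitone_of_deriv_nonpos
  · exact fun s => ((hderiv s).differentiableAt)
  · intro s
    rw [(hderiv s).deriv]
    have ht : exp (s • A₀ᵀ) = (exp (s • A₀))ᵀ := by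
      rw [← Matrix.transpose_smul, Matrix.exp_transpose]
    set e := exp (s • A₀) with he
    set w := e *ᵥ v with hw
    have hcomm : A₀ * e = e * A₀ := (((Commute.refl A₀).smul_right s).exp_right).eq
    have hM1 : A₀ᵀ * eᵀ * P₀ * e = (e * A₀)ᵀ * (P₀ * e) := by
      rw [Matrix.transpose_mul, Matrix.mul_assoc, Matrix.mul_assoc]
    have key1 : v ⬝ᵥ ((A₀ᵀ * eᵀ * P₀ * e) *ᵥ v) = (A₀ *ᵥ w) ⬝ᵥ (P₀ *ᵥ w) := by
      rw [hM1, ← Matrix.mulVec_mulVec, dot_transpose, hw,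
        Matrix.mulVec_mulVec, Matrix.mulVec_mulVec, ← hcomm]
    have hM2 : eᵀ * P₀ * (e * A₀) = eᵀ * (P₀ * A₀ * e) := by
      rw [← hcomm]; simp only [Matrix.mul_assoc]
    have key2 : v ⬝ᵥ ((eᵀ * P₀ * (e * A₀)) *ᵥ v) = w ⬝ᵥ ((P₀ * A₀) *ᵥ w) := by
      rw [hM2, ← Matrix.mulVec_mulVec, dot_transpose, hw, Matrix.mulVec_mulVec]
    have hval : Lc (A₀ᵀ * exp (s • A₀ᵀ) * P₀ * e + exp (s • A₀ᵀ) * P₀ * (e * A₀))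
        = w ⬝ᵥ ((A₀ᵀ * P₀ + P₀ * A₀) *ᵥ w) := by
      show v ⬝ᵥ (_ *ᵥ v) = _
      rw [ht, Matrix.add_mulVec, dotProduct_add, key1, key2,
        Matrix.add_mulVec, dotProduct_add]
      congr 1
      rw [← Matrix.mulVec_mulVec, dot_transpose]
    rw [hval]
    have hnn : 0 ≤ w ⬝ᵥ ((-(A₀ᵀ * P₀ + P₀ * A₀)) *ᵥ w) := by
      simpa using hQ.posSemidef.re_dotProduct_nonneg w
    rw [Matrix.neg_mulVec, dotProduct_neg] at hnn
    linarith

lemma norm_sq_le_dot {n : ℕ} (z : Fin n → ℝ) : ‖z‖ ^ 2 ≤ z ⬝ᵥ z := by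
  have h : ‖z‖ ≤ Real.sqrt (z ⬝ᵥ z) := by
    refine pi_norm_le_iff_of_nonneg (Real.sqrt_nonneg _) |>.mpr fun i => ?_
    rw [Real.norm_eq_abs, ← Real.sqrt_sq_eq_abs]
    apply Real.sqrt_le_sqrt
    rw [sq]
    exact Finset.single_le_sum (f := fun j => z j * z j)
      (fun j _ => mul_self_nonneg _) (Finset.mem_univ i)
  calc ‖z‖ ^ 2 ≤ Real.sqrt (z ⬝ᵥ z) ^ 2 := pow_le_pow_left₀ (norm_nonneg z) h 2
  _ = z ⬝ᵥ z := Real.sq_sqrt (dotProduct_self_nonneg z)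


/-- the quadratic (m = 1) Lyapunov conditions of Geromel–Colaneri
imply asymptotic stability of the switched linear system under every switching
signal with dwell time at least `τ`. -/
theorem quadratic_conditions_imply_dwell_time_stability
    (n N : ℕ) (A : Fin N → Matrix (Fin n) (Fin n) ℝ) (τ : ℝ) (hτ : 0 < τ)
    (P : Fin N → Matrix (Fin n) (Fin n) ℝ)
    (hPsymm : ∀ i, (P i).IsSymm)
    (hPpos : ∀ i, (P i).PosDef)
    (hder : ∀ i, (-((A i)ᵀ * P i + P i * A i)).PosDef)
    (hjump : ∀ i j, i ≠ j →
      (P i - NormedSpace.exp (τ • (A i)ᵀ) * P j * NormedSpace.exp (τ • A i)).PosDef) :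
    ∀ (σ : ℕ → Fin N), (∀ k, σ (k + 1) ≠ σ k) →
    ∀ (δ : ℕ → ℝ), (∀ k, τ ≤ δ k) →
    ∀ (x : ℕ → Fin n → ℝ), (∀ k, x (k + 1) = NormedSpace.exp (δ k • A (σ k)) *ᵥ x k) →
    ∀ ε > (0 : ℝ), ∃ K : ℕ, ∀ k ≥ K, ∀ s ∈ Set.Icc (0 : ℝ) (δ k),
      ‖NormedSpace.exp (s • A (σ k)) *ᵥ x k‖ < ε := by
  intro σ hσ δ hδ x hx ε hε
  rcases Nat.eq_zero_or_pos n with hn | hn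
  · subst hn
    refine ⟨0, fun k _ s _ => ?_⟩
    have hz : (exp (s • A (σ k)) *ᵥ x k) = 0 := funext fun i => i.elim0
    rw [hz, norm_zero]; exact hε
  haveI : Nonempty (Fin N) := ⟨σ 0⟩
  set V : Fin N → (Fin n → ℝ) → ℝ := fun i y => y ⬝ᵥ (P i *ᵥ y) with hV
  choose cf hcf0 hcf using fun i => quad_lower_s1 hn _ (hPpos i)
  choose Cf hCf0 hCf using fun i => quad_upper hn (P i)
  have hflow : ∀ i (v : Fin n → ℝ),
      Antitone (fun s : ℝ => V i (exp (s • A i) *ᵥ v)) :=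
    fun i v => flow_antitone (A i) (P i) (hder i) v
  have hflow0 : ∀ i v (s : ℝ), 0 ≤ s → V i (exp (s • A i) *ᵥ v) ≤ V i v := by
    intro i v s hs
    have h := hflow i v hs
    simpa [zero_smul, exp_zero, Matrix.one_mulVec] using h
  have hVnn : ∀ i y, 0 ≤ V i y := fun i y =>
    (mul_nonneg (hcf0 i).le (dotProduct_self_nonneg y)).trans (hcf i y)
  have hθpair : ∀ i j, ∃ θ₀, 0 ≤ θ₀ ∧ θ₀ < 1 ∧
      ∀ y, i ≠ j → V j (exp (τ • A i) *ᵥ y) ≤ θ₀ * V i y := by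
    intro i j
    by_cases hij : i = j
    · exact ⟨1/2, by norm_num, by norm_num, fun y h => absurd hij h⟩
    obtain ⟨a, ha0, ha⟩ := quad_lower_s1 hn _ (hjump i j hij)
    have ht : exp (τ • (A i)ᵀ) = (exp (τ • A i))ᵀ := by
      rw [← Matrix.transpose_smul, Matrix.exp_transpose]
    set E := exp (τ • A i) with hE
    have expand : ∀ y : Fin n → ℝ,
        y ⬝ᵥ ((exp (τ • (A i)ᵀ) * P j * E) *ᵥ y) = V j (E *ᵥ y) := by
      intro y
      rw [ht, Matrix.mul_assoc, ← Matrix.mulVec_mulVec, dot_transpose,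
        ← Matrix.mulVec_mulVec]
    have hsub : ∀ y : Fin n → ℝ,
        y ⬝ᵥ ((P i - exp (τ • (A i)ᵀ) * P j * E) *ᵥ y)
          = V i y - V j (E *ᵥ y) := by
      intro y
      rw [Matrix.sub_mulVec, dotProduct_sub, expand]
    have haC : a ≤ Cf i := by
      set u : Fin n → ℝ := Pi.single ⟨0, hn⟩ 1 with hu
      have huu : u ⬝ᵥ u = 1 := by
        simp [hu, dotProduct, Pi.single_apply, Finset.sum_ite_eq']
      have h1 := ha u
      rw [hsub u, huu, mul_one] at h1
      have h2 := hVnn j (E *ᵥ u)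
      have h3 := hCf i u
      rw [huu, mul_one] at h3
      linarith
    refine ⟨1 - a / Cf i, by
        have := div_le_one_of_le₀ haC (hCf0 i).le
        linarith, by
        have := div_pos ha0 (hCf0 i)
        linarith, fun y _ => ?_⟩
    have h1 := ha y
    rw [hsub y] at h1
    have h2 : a / Cf i * V i y ≤ a * (y ⬝ᵥ y) := by
      have h3 := hCf i y
      have h4 := mul_le_mul_of_nonneg_left h3 (div_nonneg ha0.le (hCf0 i).le)
      calc a / Cf i * V i y ≤ a / Cf i * (Cf i * (y ⬝ᵥ y)) := h4
      _ = a * (y ⬝ᵥ y) := by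
        have hCne : Cf i ≠ 0 := (hCf0 i).ne'
        field_simp
    have := hVnn i y
    nlinarith [h1, h2]
  choose Θ hΘ0 hΘ1 hΘ using hθpair
  set θ : ℝ := Finset.sup' Finset.univ Finset.univ_nonempty
    (fun p : Fin N × Fin N => Θ p.1 p.2) with hθdef
  have hθ0 : 0 ≤ θ := le_trans (hΘ0 (σ 0) (σ 0))
    (Finset.le_sup' (f := fun p : Fin N × Fin N => Θ p.1 p.2) (Finset.mem_univ (σ 0, σ 0)))
  have hθ1 : θ < 1 := (Finset.sup'_lt_iff _).mpr fun p _ => hΘ1 p.1 p.2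
  have hθle : ∀ i j, Θ i j ≤ θ := fun i j =>
    Finset.le_sup' (f := fun p : Fin N × Fin N => Θ p.1 p.2) (Finset.mem_univ (i, j))
  have hdecay : ∀ k, V (σ k) (x k) ≤ θ ^ k * V (σ 0) (x 0) := by
    intro k
    induction k with
    | zero => simp
    | succ k ih =>
      have hij : σ k ≠ σ (k + 1) := (hσ k).symm
      have hsplit : exp (δ k • A (σ k))
          = exp (τ • A (σ k)) * exp ((δ k - τ) • A (σ k)) := by
        have h := Matrix.exp_add_of_commute (τ • A (σ k)) ((δ k - τ) • A (σ k))
          (((Commute.refl (A (σ k))).smul_left τ).smul_right (δ k - τ))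
        rw [← add_smul] at h
        have h2 : τ + (δ k - τ) = δ k := by ring
        rw [h2] at h
        exact h
      calc V (σ (k + 1)) (x (k + 1))
          = V (σ (k + 1)) (exp (τ • A (σ k)) *ᵥ (exp ((δ k - τ) • A (σ k)) *ᵥ x k)) := by
            rw [hx k, hsplit, ← Matrix.mulVec_mulVec]
      _ ≤ Θ (σ k) (σ (k + 1)) * V (σ k) (exp ((δ k - τ) • A (σ k)) *ᵥ x k) :=
            hΘ _ _ _ hij
      _ ≤ θ * V (σ k) (x k) := by
            exact mul_le_mul (hθle _ _) (hflow0 (σ k) (x k) (δ k - τ) (by linarith [hδ k]))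
              (hVnn _ _) hθ0
      _ ≤ θ * (θ ^ k * V (σ 0) (x 0)) := mul_le_mul_of_nonneg_left ih hθ0
      _ = θ ^ (k + 1) * V (σ 0) (x 0) := by ring
  set c : ℝ := Finset.inf' Finset.univ Finset.univ_nonempty cf with hcdef
  have hc0 : 0 < c := (Finset.lt_inf'_iff _).mpr fun i _ => hcf0 i
  have hcle : ∀ i, c ≤ cf i := fun i => Finset.inf'_le _ (Finset.mem_univ i)
  set V0 : ℝ := V (σ 0) (x 0) with hV0def
  have hV0 : 0 ≤ V0 := hVnn _ _
  have hlim : Filter.Tendsto (fun k : ℕ => θ ^ k * V0) Filter.atTop (nhds 0) := by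
    have := (tendsto_pow_atTop_nhds_zero_of_lt_one hθ0 hθ1).mul_const V0
    simpa using this
  obtain ⟨K, hK⟩ := (Metric.tendsto_atTop.mp hlim (c * ε ^ 2) (by positivity))
  refine ⟨K, fun k hk s hs => ?_⟩
  set z : Fin n → ℝ := exp (s • A (σ k)) *ᵥ x k with hz
  have h1 : V (σ k) z ≤ V (σ k) (x k) := hflow0 _ _ s hs.1
  have h2 : c * (z ⬝ᵥ z) ≤ V (σ k) z :=
    (mul_le_mul_of_nonneg_right (hcle _) (dotProduct_self_nonneg z)).trans (hcf _ z)
  have h3 : θ ^ k * V0 < c * ε ^ 2 := by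
    have := hK k hk
    rwa [Real.dist_eq, sub_zero, abs_of_nonneg (mul_nonneg (pow_nonneg hθ0 k) hV0)] at this
  have h4 : c * ‖z‖ ^ 2 ≤ c * (z ⬝ᵥ z) :=
    mul_le_mul_of_nonneg_left (norm_sq_le_dot z) hc0.le
  have h5 : c * ‖z‖ ^ 2 < c * ε ^ 2 :=
    lt_of_le_of_lt (h4.trans (h2.trans (h1.trans (hdecay k)))) h3
  have h6 : ‖z‖ ^ 2 < ε ^ 2 := (mul_lt_mul_iff_right₀ hc0).mp h5
  exact lt_of_pow_lt_pow_left₀ 2 hε.le h6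
end

section
/- Let A be a real n×n matrix, τ > 0, let P_1, …, P_m and Q be symmetric positive definite n×n matrices, let γ_1, …, γ_m ≥ 0 be scalars, and fix r ∈ {1,…,m}. Suppose exp(A^T τ) Q exp(A τ) ≺ P_r + Σ_{s≠r} γ_s (P_s − P_r). Then for every x ≠ 0 such that x^T P_r x ≥ x^T P_s x for all s ∈ {1,…,m}, one has x^T exp(A^T τ) Q exp(A τ) x < x^T P_r x. Consequently, if the above holds for every r (with scalars depending on r), then for all x ≠ 0, (exp(Aτ)x)^T Q (exp(Aτ)x) < max_{1≤r≤m} x^T P_r x. -/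
open Matrix NormedSpace

lemma dot_sum_mulVec {n k : ℕ} (s : Finset (Fin k)) (M : Fin k → Matrix (Fin n) (Fin n) ℝ)
    (x : Fin n → ℝ) : x ⬝ᵥ (∑ i ∈ s, M i) *ᵥ x = ∑ i ∈ s, x ⬝ᵥ (M i) *ᵥ x := by
  induction s using Finset.induction with
  | empty => simp [Matrix.mulVec]
  | @insert a s h ih => simp [Finset.sum_insert h, Matrix.add_mulVec, dotProduct_add, ih]

/-- the S-procedure step for the jump condition. If
`exp(Aᵀτ) Q exp(Aτ) ≺ P_r + ∑_{s≠r} γ_s (P_s − P_r)` then at every nonzero `x`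
where the `r`-th quadratic is maximal the jump quadratic is strictly below
`xᵀ P_r x`; consequently, if this holds for every `r` (with scalars depending on `r`),
then `(exp(Aτ)x)ᵀ Q (exp(Aτ)x) < max_r xᵀ P_r x` for every `x ≠ 0`. -/
theorem jump_s_procedure
    (n m : ℕ) (hm : 0 < m) (A : Matrix (Fin n) (Fin n) ℝ) (τ : ℝ) (hτ : 0 < τ)
    (P : Fin m → Matrix (Fin n) (Fin n) ℝ) (Q : Matrix (Fin n) (Fin n) ℝ)
    (hPsymm : ∀ r, (P r).IsSymm) (hPpos : ∀ r, (P r).PosDef)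
    (hQsymm : Q.IsSymm) (hQpos : Q.PosDef)
    (γ : Fin m → Fin m → ℝ) (hγ : ∀ r s, 0 ≤ γ r s) :
    (∀ r : Fin m,
      ((P r + ∑ s ∈ Finset.univ.erase r, γ r s • (P s - P r)) -
        (exp (τ • Aᵀ) * Q * exp (τ • A))).PosDef →
      ∀ x : Fin n → ℝ, x ≠ 0 → (∀ s : Fin m, x ⬝ᵥ P s *ᵥ x ≤ x ⬝ᵥ P r *ᵥ x) →
        x ⬝ᵥ (exp (τ • Aᵀ) * Q * exp (τ • A)) *ᵥ x < x ⬝ᵥ P r *ᵥ x) ∧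
    ((∀ r : Fin m,
      ((P r + ∑ s ∈ Finset.univ.erase r, γ r s • (P s - P r)) -
        (exp (τ • Aᵀ) * Q * exp (τ • A))).PosDef) →
      ∀ x : Fin n → ℝ, x ≠ 0 →
        (exp (τ • A) *ᵥ x) ⬝ᵥ Q *ᵥ (exp (τ • A) *ᵥ x) <
          Finset.univ.sup' (Finset.univ_nonempty_iff.mpr ⟨⟨0, hm⟩⟩)
            (fun r : Fin m => x ⬝ᵥ P r *ᵥ x)) := by
  have key : ∀ r : Fin m,
      ((P r + ∑ s ∈ Finset.univ.erase r, γ r s • (P s - P r)) -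
        (exp (τ • Aᵀ) * Q * exp (τ • A))).PosDef →
      ∀ x : Fin n → ℝ, x ≠ 0 → (∀ s : Fin m, x ⬝ᵥ P s *ᵥ x ≤ x ⬝ᵥ P r *ᵥ x) →
        x ⬝ᵥ (exp (τ • Aᵀ) * Q * exp (τ • A)) *ᵥ x < x ⬝ᵥ P r *ᵥ x := by
    intro r hpd x hx hmax
    have h1 : 0 < x ⬝ᵥ ((P r + ∑ s ∈ Finset.univ.erase r, γ r s • (P s - P r)) -
        (exp (τ • Aᵀ) * Q * exp (τ • A))) *ᵥ x := by
      simpa using hpd.dotProduct_mulVec_pos hx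
    rw [Matrix.sub_mulVec, dotProduct_sub, Matrix.add_mulVec, dotProduct_add,
      dot_sum_mulVec] at h1
    have h2 : ∑ s ∈ Finset.univ.erase r, x ⬝ᵥ (γ r s • (P s - P r)) *ᵥ x ≤ 0 := by
      apply Finset.sum_nonpos
      intro s _
      rw [Matrix.smul_mulVec, dotProduct_smul, Matrix.sub_mulVec, dotProduct_sub]
      exact mul_nonpos_of_nonneg_of_nonpos (hγ r s) (sub_nonpos.mpr (hmax s))
    linarith
  refine ⟨key, ?_⟩
  intro hall x hx
  obtain ⟨r, -, hrmax⟩ := Finset.exists_mem_eq_sup' (Finset.univ_nonempty_iff.mpr ⟨⟨0, hm⟩⟩)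
    (fun r : Fin m => x ⬝ᵥ P r *ᵥ x)
  rw [hrmax]
  have hmax : ∀ s : Fin m, x ⬝ᵥ P s *ᵥ x ≤ x ⬝ᵥ P r *ᵥ x := by
    intro s
    rw [← hrmax]
    exact Finset.le_sup' (fun r : Fin m => x ⬝ᵥ P r *ᵥ x) (Finset.mem_univ s)
  have := key r (hall r) x hx hmax
  have heq : x ⬝ᵥ (exp (τ • Aᵀ) * Q * exp (τ • A)) *ᵥ x =
      (exp (τ • A) *ᵥ x) ⬝ᵥ Q *ᵥ (exp (τ • A) *ᵥ x) := by
    have ht : exp (τ • Aᵀ) = (exp (τ • A))ᵀ := by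
      rw [← Matrix.transpose_smul, Matrix.exp_transpose]
    rw [ht, ← Matrix.mulVec_mulVec, ← Matrix.mulVec_mulVec, Matrix.dotProduct_mulVec,
      Matrix.vecMul_transpose, Matrix.dotProduct_mulVec]
  linarith [this, heq ▸ this]
end

section
/- Let A be a real n×n matrix, let P_1, …, P_m be symmetric positive definite n×n matrices, and suppose there exist scalars α_{rs} > 0 such that for every r ∈ {1,…,m}: A^T P_r + P_r A ≺ Σ_{s≠r} α_{rs} (P_s − P_r). Then A is Hurwitz in the sense that for every x ∈ ℝ^n, exp(tA) x → 0 as t → ∞. -/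
open Matrix NormedSpace Filter Topology

/-- `M ↦ M *ᵥ x` as a linear map. -/
private def mulVecRight {n : Type*} [Fintype n] {R : Type*} [CommRing R] (x : n → R) :
    Matrix n n R →ₗ[R] (n → R) where
  toFun M := M *ᵥ x
  map_add' M N := Matrix.add_mulVec M N x
  map_smul' c M := Matrix.smul_mulVec c M x

private lemma sum_mulVec' {n : Type*} [Fintype n] {R : Type*} [CommRing R] {ι : Type*}
    (s : Finset ι) (f : ι → Matrix n n R) (x : n → R) :
    (∑ i ∈ s, f i) *ᵥ x = ∑ i ∈ s, f i *ᵥ x := by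
  rw [show (∑ i ∈ s, f i) *ᵥ x = mulVecRight x (∑ i ∈ s, f i) from rfl, map_sum]
  rfl

private lemma dot_sum' {n : Type*} [Fintype n] {ι : Type*}
    (s : Finset ι) (f : ι → (n → ℝ)) (x : n → ℝ) :
    x ⬝ᵥ (∑ i ∈ s, f i) = ∑ i ∈ s, x ⬝ᵥ f i := by
  simp only [dotProduct, Finset.sum_apply, Finset.mul_sum]
  exact Finset.sum_comm

section Quad

variable {n m : ℕ} (A : Matrix (Fin n) (Fin n) ℝ)
    (P : Fin m → Matrix (Fin n) (Fin n) ℝ) (α : Fin m → Fin m → ℝ)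

private lemma rhs_expand (r : Fin m) (x : Fin n → ℝ) :
    x ⬝ᵥ ((∑ s ∈ Finset.univ.erase r, α r s • (P s - P r)) *ᵥ x)
      = ∑ s ∈ Finset.univ.erase r, α r s * (x ⬝ᵥ (P s *ᵥ x) - x ⬝ᵥ (P r *ᵥ x)) := by
  rw [show (∑ s ∈ Finset.univ.erase r, α r s • (P s - P r)) *ᵥ x
      = ∑ s ∈ Finset.univ.erase r, α r s • ((P s - P r) *ᵥ x) by
    rw [sum_mulVec']
    exact Finset.sum_congr rfl fun s _ => by rw [Matrix.smul_mulVec]]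
  rw [dot_sum']
  refine Finset.sum_congr rfl fun s _ => ?_
  simp [Matrix.sub_mulVec, dotProduct_smul, dotProduct_sub, smul_eq_mul, mul_sub]

private lemma quad_lt
    (hineq : ∀ r : Fin m,
      ((∑ s ∈ Finset.univ.erase r, α r s • (P s - P r)) -
        (Aᵀ * P r + P r * A)).PosDef) (r : Fin m) (x : Fin n → ℝ) (hx : x ≠ 0) :
    x ⬝ᵥ ((Aᵀ * P r + P r * A) *ᵥ x) <
      ∑ s ∈ Finset.univ.erase r, α r s * (x ⬝ᵥ (P s *ᵥ x) - x ⬝ᵥ (P r *ᵥ x)) := by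
  have h := (hineq r).dotProduct_mulVec_pos hx
  simp only [star_trivial, Matrix.sub_mulVec, dotProduct_sub] at h
  have := rhs_expand P α r x
  linarith

private lemma quad_le
    (hineq : ∀ r : Fin m,
      ((∑ s ∈ Finset.univ.erase r, α r s • (P s - P r)) -
        (Aᵀ * P r + P r * A)).PosDef) (r : Fin m) (x : Fin n → ℝ) :
    x ⬝ᵥ ((Aᵀ * P r + P r * A) *ᵥ x) ≤
      ∑ s ∈ Finset.univ.erase r, α r s * (x ⬝ᵥ (P s *ᵥ x) - x ⬝ᵥ (P r *ᵥ x)) := by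
  have h := (hineq r).posSemidef.dotProduct_mulVec_nonneg x
  simp only [star_trivial, Matrix.sub_mulVec, dotProduct_sub] at h
  have := rhs_expand P α r x
  linarith

private lemma quad_identity (Pm : Matrix (Fin n) (Fin n) ℝ) (hP : Pm.IsSymm)
    (a b : Fin n → ℝ) (σ ω : ℝ)
    (ha : A *ᵥ a = σ • a - ω • b) (hb : A *ᵥ b = ω • a + σ • b) :
    a ⬝ᵥ ((Aᵀ * Pm + Pm * A) *ᵥ a) + b ⬝ᵥ ((Aᵀ * Pm + Pm * A) *ᵥ b)
      = 2 * σ * (a ⬝ᵥ (Pm *ᵥ a) + b ⬝ᵥ (Pm *ᵥ b)) := by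
  have hsymm : ∀ x y : Fin n → ℝ, x ⬝ᵥ (Pm *ᵥ y) = (Pm *ᵥ x) ⬝ᵥ y := fun x y => by
    rw [Matrix.dotProduct_mulVec, ← hP, Matrix.vecMul_transpose, hP]
  have key : ∀ x : Fin n → ℝ, x ⬝ᵥ ((Aᵀ * Pm + Pm * A) *ᵥ x)
      = 2 * ((A *ᵥ x) ⬝ᵥ (Pm *ᵥ x)) := by
    intro x
    rw [Matrix.add_mulVec, dotProduct_add, ← Matrix.mulVec_mulVec, ← Matrix.mulVec_mulVec]
    rw [Matrix.dotProduct_mulVec (v := x) (A := Aᵀ), Matrix.vecMul_transpose]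
    rw [hsymm x (A *ᵥ x), dotProduct_comm]
    ring
  rw [key a, key b, ha, hb]
  simp only [sub_dotProduct, add_dotProduct, smul_dotProduct, smul_eq_mul]
  have : a ⬝ᵥ (Pm *ᵥ b) = b ⬝ᵥ (Pm *ᵥ a) := by rw [hsymm, dotProduct_comm]
  rw [this]; ring

/-- Any complex eigenvalue of `A` has negative real part. -/
private lemma re_neg_of_eigen (hm : 0 < m)
    (hPsymm : ∀ r, (P r).IsSymm) (hPpos : ∀ r, (P r).PosDef)
    (hα : ∀ r s, 0 < α r s)
    (hineq : ∀ r : Fin m,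
      ((∑ s ∈ Finset.univ.erase r, α r s • (P s - P r)) -
        (Aᵀ * P r + P r * A)).PosDef)
    (μ : ℂ) (v : Fin n → ℂ) (hv : v ≠ 0)
    (heig : A.map (Complex.ofReal) *ᵥ v = μ • v) : μ.re < 0 := by
  classical
  set a : Fin n → ℝ := fun i => (v i).re with ha_def
  set b : Fin n → ℝ := fun i => (v i).im with hb_def
  have hab : a ≠ 0 ∨ b ≠ 0 := by
    by_contra h
    push_neg at h
    apply hv
    funext i
    exact Complex.ext (by simpa [ha_def] using congrFun h.1 i)
      (by simpa [hb_def] using congrFun h.2 i)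
  have ha : A *ᵥ a = μ.re • a - μ.im • b := by
    funext i
    have h := congrFun heig i
    simp only [Matrix.mulVec, dotProduct, Matrix.map_apply, Pi.smul_apply, smul_eq_mul] at h
    have h2 := congrArg Complex.re h
    simp only [Complex.re_sum, Complex.mul_re, Complex.ofReal_re, Complex.ofReal_im,
      zero_mul, sub_zero] at h2
    simpa [Matrix.mulVec, dotProduct, ha_def, hb_def] using h2
  have hb : A *ᵥ b = μ.im • a + μ.re • b := by
    funext i
    have h := congrFun heig i
    simp only [Matrix.mulVec, dotProduct, Matrix.map_apply, Pi.smul_apply, smul_eq_mul] at h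
    have h2 := congrArg Complex.im h
    simp only [Complex.im_sum, Complex.mul_im, Complex.ofReal_re, Complex.ofReal_im,
      zero_mul, add_zero] at h2
    simpa [Matrix.mulVec, dotProduct, ha_def, hb_def, add_comm] using h2
  set q : Fin m → ℝ := fun s => a ⬝ᵥ (P s *ᵥ a) + b ⬝ᵥ (P s *ᵥ b) with hq_def
  have huniv : (Finset.univ : Finset (Fin m)).Nonempty := by
    have : Nonempty (Fin m) := Fin.pos_iff_nonempty.mp hm
    exact Finset.univ_nonempty
  obtain ⟨r, -, hr⟩ := Finset.exists_max_image Finset.univ q huniv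
  have hiden := quad_identity A (P r) (hPsymm r) a b μ.re μ.im ha hb
  -- strict inequality for the pair
  have hstrict : a ⬝ᵥ ((Aᵀ * P r + P r * A) *ᵥ a) + b ⬝ᵥ ((Aᵀ * P r + P r * A) *ᵥ b) <
      ∑ s ∈ Finset.univ.erase r, α r s * (q s - q r) := by
    have hsum : ∑ s ∈ Finset.univ.erase r, α r s * (q s - q r)
        = (∑ s ∈ Finset.univ.erase r, α r s * (a ⬝ᵥ (P s *ᵥ a) - a ⬝ᵥ (P r *ᵥ a)))
          + ∑ s ∈ Finset.univ.erase r, α r s * (b ⬝ᵥ (P s *ᵥ b) - b ⬝ᵥ (P r *ᵥ b)) := by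
      rw [← Finset.sum_add_distrib]
      exact Finset.sum_congr rfl fun s _ => by simp only [hq_def]; ring
    rw [hsum]
    rcases hab with hA | hB
    · exact add_lt_add_of_lt_of_le (quad_lt A P α hineq r a hA) (quad_le A P α hineq r b)
    · exact add_lt_add_of_le_of_lt (quad_le A P α hineq r a) (quad_lt A P α hineq r b hB)
  have hnonpos : ∑ s ∈ Finset.univ.erase r, α r s * (q s - q r) ≤ 0 := by
    refine Finset.sum_nonpos fun s _ => ?_
    have h1 : q s ≤ q r := hr s (Finset.mem_univ s)
    have h2 : 0 < α r s := hα r s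
    nlinarith
  have hqr : 0 < q r := by
    rcases hab with hA | hB
    · have h1 : 0 < a ⬝ᵥ (P r *ᵥ a) := by simpa using (hPpos r).dotProduct_mulVec_pos hA
      have h2 : 0 ≤ b ⬝ᵥ (P r *ᵥ b) := by simpa using (hPpos r).posSemidef.dotProduct_mulVec_nonneg b
      simp only [hq_def]; linarith
    · have h1 : 0 ≤ a ⬝ᵥ (P r *ᵥ a) := by simpa using (hPpos r).posSemidef.dotProduct_mulVec_nonneg a
      have h2 : 0 < b ⬝ᵥ (P r *ᵥ b) := by simpa using (hPpos r).dotProduct_mulVec_pos hB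
      simp only [hq_def]; linarith
  have : 2 * μ.re * q r < 0 := by rw [← hiden]; linarith
  nlinarith

end Quad

private lemma exp_mulVec_eq_sum {n : ℕ} (N : Matrix (Fin n) (Fin n) ℂ) (v : Fin n → ℂ) (k : ℕ)
    (hv : (N ^ k) *ᵥ v = 0) :
    exp N *ᵥ v = ∑ j ∈ Finset.range k, ((j.factorial : ℂ)⁻¹ • ((N ^ j) *ᵥ v)) := by
  letI : SeminormedRing (Matrix (Fin n) (Fin n) ℂ) := Matrix.linftyOpSemiNormedRing
  letI : NormedRing (Matrix (Fin n) (Fin n) ℂ) := Matrix.linftyOpNormedRing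
  letI : NormedAlgebra ℂ (Matrix (Fin n) (Fin n) ℂ) := Matrix.linftyOpNormedAlgebra
  have hsum := exp_series_hasSum_exp' (𝕂 := ℂ) N
  let L : Matrix (Fin n) (Fin n) ℂ →ₗ[ℂ] (Fin n → ℂ) := mulVecRight v
  have hL : Continuous L := LinearMap.continuous_of_finiteDimensional L
  have hsum2 := (hsum.map L hL :
    HasSum (fun j : ℕ => L ((j.factorial : ℂ)⁻¹ • N ^ j)) (L (exp N)))
  have heq : ∀ j : ℕ, L ((j.factorial : ℂ)⁻¹ • N ^ j) = (j.factorial : ℂ)⁻¹ • ((N ^ j) *ᵥ v) :=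
    fun j => by simp [L, mulVecRight, Matrix.smul_mulVec]
  have hzero : ∀ j ∉ Finset.range k,
      (fun j : ℕ => (j.factorial : ℂ)⁻¹ • ((N ^ j) *ᵥ v)) j = 0 := by
    intro j hj
    rw [Finset.mem_range, not_lt] at hj
    have : N ^ j *ᵥ v = 0 := by
      rw [show j = (j - k) + k from (Nat.sub_add_cancel hj).symm, pow_add,
        ← Matrix.mulVec_mulVec, hv, Matrix.mulVec_zero]
    simp [this]
  have hsum3 : HasSum (fun j : ℕ => (j.factorial : ℂ)⁻¹ • ((N ^ j) *ᵥ v))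
      (∑ j ∈ Finset.range k, (j.factorial : ℂ)⁻¹ • ((N ^ j) *ᵥ v)) :=
    hasSum_sum_of_ne_finset_zero hzero
  exact (hsum2.congr_fun (fun j => (heq j).symm)).unique hsum3

private lemma exp_smul_one_matrix {n : ℕ} (c : ℂ) :
    exp (c • (1 : Matrix (Fin n) (Fin n) ℂ)) = Complex.exp c • 1 := by
  letI : SeminormedRing (Matrix (Fin n) (Fin n) ℂ) := Matrix.linftyOpSemiNormedRing
  letI : NormedRing (Matrix (Fin n) (Fin n) ℂ) := Matrix.linftyOpNormedRing
  letI : NormedAlgebra ℂ (Matrix (Fin n) (Fin n) ℂ) := Matrix.linftyOpNormedAlgebra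
  have h1 : c • (1 : Matrix (Fin n) (Fin n) ℂ) = algebraMap ℂ _ c :=
    (Algebra.algebraMap_eq_smul_one c).symm
  rw [h1]
  exact (algebraMap_exp_comm (𝔸 := Matrix (Fin n) (Fin n) ℂ) c).symm.trans
    (by rw [Algebra.algebraMap_eq_smul_one, Complex.exp_eq_exp_ℂ])

private lemma scalar_decay (σ : ℝ) (hσ : σ < 0) (j : ℕ) :
    Tendsto (fun t : ℝ => Real.exp (t * σ) * |t| ^ j) atTop (𝓝 0) := by
  have hpos : (0:ℝ) < -σ := by linarith
  have h1 : Tendsto (fun t : ℝ => ((-σ) * t) ^ j * Real.exp (-((-σ) * t))) atTop (𝓝 0) :=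
    (Real.tendsto_pow_mul_exp_neg_atTop_nhds_zero j).comp (tendsto_id.const_mul_atTop hpos)
  have h2 : Tendsto (fun t : ℝ => ((-σ)⁻¹) ^ j * (((-σ) * t) ^ j * Real.exp (-((-σ) * t))))
      atTop (𝓝 0) := by simpa using h1.const_mul (((-σ)⁻¹) ^ j)
  refine h2.congr' ?_
  filter_upwards [eventually_ge_atTop (0:ℝ)] with t ht
  rw [abs_of_nonneg ht]
  rw [show (-σ)⁻¹ ^ j * ((-σ * t) ^ j * Real.exp (-(-σ * t)))
      = ((-σ)⁻¹ * -σ) ^ j * (t ^ j * Real.exp (t * σ)) by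
    rw [mul_pow, mul_pow]; ring_nf]
  rw [inv_mul_cancel₀ (ne_of_gt hpos), one_pow, one_mul, mul_comm]

private lemma gen_eig_decay {n : ℕ} (B : Matrix (Fin n) (Fin n) ℂ) (μ : ℂ) (hμ : μ.re < 0)
    (v : Fin n → ℂ) (k : ℕ) (hv : ((B - μ • 1) ^ k) *ᵥ v = 0) :
    Tendsto (fun t : ℝ => exp ((t : ℂ) • B) *ᵥ v) atTop (𝓝 0) := by
  set N : Matrix (Fin n) (Fin n) ℂ := B - μ • 1 with hN
  have key : ∀ t : ℝ, exp ((t : ℂ) • B) *ᵥ v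
      = ∑ j ∈ Finset.range k,
          (Complex.exp ((t : ℂ) * μ) * ((j.factorial : ℂ)⁻¹ * (t : ℂ) ^ j)) • (N ^ j *ᵥ v) := by
    intro t
    have hsplit : (t : ℂ) • B = ((t : ℂ) * μ) • (1 : Matrix (Fin n) (Fin n) ℂ) + (t : ℂ) • N := by
      rw [hN, smul_sub, ← smul_smul]
      abel
    have hcomm : Commute (((t : ℂ) * μ) • (1 : Matrix (Fin n) (Fin n) ℂ)) ((t : ℂ) • N) :=
      ((Commute.one_left ((t : ℂ) • N)).smul_left _)
    rw [hsplit, Matrix.exp_add_of_commute _ _ hcomm, exp_smul_one_matrix,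
      ← Matrix.mulVec_mulVec, Matrix.smul_mulVec, Matrix.one_mulVec]
    have hvk : (((t : ℂ) • N) ^ k) *ᵥ v = 0 := by
      rw [smul_pow, Matrix.smul_mulVec, hv, smul_zero]
    rw [exp_mulVec_eq_sum ((t : ℂ) • N) v k hvk, Finset.smul_sum]
    refine Finset.sum_congr rfl fun j _ => ?_
    rw [smul_pow, Matrix.smul_mulVec, smul_smul, smul_smul]
    congr 1
    ring
  rw [show (0 : Fin n → ℂ) = ∑ j ∈ Finset.range k, (0 : Fin n → ℂ) by simp]
  refine Tendsto.congr (fun t => (key t).symm) (tendsto_finset_sum _ fun j _ => ?_)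
  rw [tendsto_zero_iff_norm_tendsto_zero]
  have hnorm : ∀ t : ℝ,
      ‖(Complex.exp ((t : ℂ) * μ) * ((j.factorial : ℂ)⁻¹ * (t : ℂ) ^ j)) • (N ^ j *ᵥ v)‖
      = (Real.exp (t * μ.re) * |t| ^ j) * ((j.factorial : ℝ)⁻¹ * ‖N ^ j *ᵥ v‖) := by
    intro t
    rw [norm_smul, norm_mul, norm_mul, norm_inv, norm_pow]
    rw [Complex.norm_exp]
    simp [Complex.norm_real, Real.norm_eq_abs, Complex.mul_re]
    ring
  have h := (scalar_decay μ.re hμ j).mul_const ((j.factorial : ℝ)⁻¹ * ‖N ^ j *ᵥ v‖)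
  rw [zero_mul] at h
  exact h.congr fun t => (hnorm t).symm

private lemma exp_map_ofReal {n : ℕ} (A : Matrix (Fin n) (Fin n) ℝ) (t : ℝ) :
    (exp (t • A)).map Complex.ofReal
      = exp ((t : ℂ) • A.map Complex.ofReal) := by
  letI : SeminormedRing (Matrix (Fin n) (Fin n) ℝ) := Matrix.linftyOpSemiNormedRing
  letI : NormedRing (Matrix (Fin n) (Fin n) ℝ) := Matrix.linftyOpNormedRing
  letI : NormedAlgebra ℝ (Matrix (Fin n) (Fin n) ℝ) := Matrix.linftyOpNormedAlgebra
  letI : SeminormedRing (Matrix (Fin n) (Fin n) ℂ) := Matrix.linftyOpSemiNormedRing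
  letI : NormedRing (Matrix (Fin n) (Fin n) ℂ) := Matrix.linftyOpNormedRing
  letI : NormedAlgebra ℝ (Matrix (Fin n) (Fin n) ℂ) := Matrix.linftyOpNormedAlgebra
  letI : NormedAlgebra ℂ (Matrix (Fin n) (Fin n) ℂ) := Matrix.linftyOpNormedAlgebra
  letI : NormedAlgebra ℚ (Matrix (Fin n) (Fin n) ℝ) := Matrix.linftyOpNormedAlgebra
  letI : NormedAlgebra ℚ (Matrix (Fin n) (Fin n) ℂ) := Matrix.linftyOpNormedAlgebra
  have hcont : Continuous (Complex.ofRealHom.mapMatrix :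
      Matrix (Fin n) (Fin n) ℝ →+* Matrix (Fin n) (Fin n) ℂ) :=
    Continuous.matrix_map continuous_id Complex.continuous_ofReal
  have h1 : (Complex.ofRealHom.mapMatrix : Matrix (Fin n) (Fin n) ℝ →+* _) (exp (t • A))
      = exp ((Complex.ofRealHom.mapMatrix : Matrix (Fin n) (Fin n) ℝ →+* _) (t • A)) :=
    map_exp _ hcont (t • A)
  have h2 : (Complex.ofRealHom.mapMatrix : Matrix (Fin n) (Fin n) ℝ →+* _) (t • A)
      = (t : ℂ) • A.map Complex.ofReal := by
    ext i j
    simp [RingHom.mapMatrix_apply, Matrix.map_apply]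
  have h3 : (exp : Matrix (Fin n) (Fin n) ℂ → _) = exp := rfl
  have h4 : (exp (t • A)).map Complex.ofReal
      = (Complex.ofRealHom.mapMatrix : Matrix (Fin n) (Fin n) ℝ →+* _) (exp (t • A)) := rfl
  rw [h4, h1, h2, h3]

/-- the BMI condition (8), certifying a strictly decreasing
piece-wise quadratic Lyapunov function for `ẋ = Ax`, forces `A` to be Hurwitz:
every trajectory `exp(tA)x` tends to `0` as `t → ∞`. -/
theorem bmi_condition_implies_hurwitz
    (n m : ℕ) (hm : 0 < m) (A : Matrix (Fin n) (Fin n) ℝ)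
    (P : Fin m → Matrix (Fin n) (Fin n) ℝ)
    (hPsymm : ∀ r, (P r).IsSymm) (hPpos : ∀ r, (P r).PosDef)
    (α : Fin m → Fin m → ℝ) (hα : ∀ r s, 0 < α r s)
    (hineq : ∀ r : Fin m,
      ((∑ s ∈ Finset.univ.erase r, α r s • (P s - P r)) -
        (Aᵀ * P r + P r * A)).PosDef) :
    ∀ x : Fin n → ℝ,
      Tendsto (fun t : ℝ => NormedSpace.exp (t • A) *ᵥ x) atTop (nhds 0) := by
  classical
  intro x
  set Bc : Matrix (Fin n) (Fin n) ℂ := A.map Complex.ofReal with hBc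
  -- the set of complex initial conditions whose trajectory decays is a submodule
  set S : Submodule ℂ (Fin n → ℂ) :=
    { carrier := {z | Tendsto (fun t : ℝ => exp ((t : ℂ) • Bc) *ᵥ z) atTop (𝓝 0)}
      add_mem' := fun {y z} hy hz => by
        simpa [Matrix.mulVec_add] using hy.add hz
      zero_mem' := by
        simp only [Set.mem_setOf_eq, Matrix.mulVec_zero]
        exact tendsto_const_nhds
      smul_mem' := fun c z hz => by
        simpa [Matrix.mulVec_smul] using hz.const_smul c } with hS
  set f : Module.End ℂ (Fin n → ℂ) := Matrix.mulVecLin Bc with hf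
  have hpow : ∀ (μ : ℂ) (k : ℕ) (z : Fin n → ℂ),
      ((f - μ • 1) ^ k) z = ((Bc - μ • 1) ^ k) *ᵥ z := by
    intro μ k
    induction k with
    | zero => intro z; simp [Matrix.one_mulVec]
    | succ k ih =>
      intro z
      rw [pow_succ', pow_succ']
      have h1 : ((f - μ • 1) * (f - μ • 1) ^ k) z = (f - μ • 1) (((f - μ • 1) ^ k) z) := rfl
      rw [h1, ih]
      show f (((Bc - μ • 1) ^ k) *ᵥ z) - (μ • (((Bc - μ • 1) ^ k) *ᵥ z))
          = ((Bc - μ • 1) * (Bc - μ • 1) ^ k) *ᵥ z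
      rw [← Matrix.mulVec_mulVec, Matrix.sub_mulVec]
      simp [hf, Matrix.mulVecLin_apply, Matrix.smul_mulVec, Matrix.one_mulVec]
  have htop : ∀ w : Fin n → ℂ, w ∈ S := by
    have hsup := Module.End.iSup_maxGenEigenspace_eq_top (f := f)
    intro w
    have hw : w ∈ (⨆ μ : ℂ, f.maxGenEigenspace μ) := by rw [hsup]; trivial
    refine (iSup_le fun μ => ?_ : (⨆ μ : ℂ, f.maxGenEigenspace μ) ≤ S) hw
    by_cases hbot : f.maxGenEigenspace μ = ⊥
    · rw [hbot]; exact bot_le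
    · -- there is a genuine eigenvector for μ, so μ.re < 0
      obtain ⟨z₀, hz₀mem, hz₀⟩ := (Submodule.ne_bot_iff _).mp hbot
      obtain ⟨k₀, hk₀⟩ := (f.mem_maxGenEigenspace μ z₀).mp hz₀mem
      rw [hpow] at hk₀
      have hex : ∃ l : ℕ, ((Bc - μ • 1) ^ l) *ᵥ z₀ = 0 := ⟨k₀, hk₀⟩
      set l := Nat.find hex with hl_def
      have hl : ((Bc - μ • 1) ^ l) *ᵥ z₀ = 0 := Nat.find_spec hex
      have hlpos : 0 < l := by
        rcases Nat.eq_zero_or_pos l with h | h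
        · exfalso; apply hz₀
          have h2 := hl
          rw [h, pow_zero, Matrix.one_mulVec] at h2
          exact h2
        · exact h
      have hprev : ¬ (((Bc - μ • 1) ^ (l - 1)) *ᵥ z₀ = 0) :=
        Nat.find_min hex (Nat.sub_lt hlpos one_pos)
      set v : Fin n → ℂ := ((Bc - μ • 1) ^ (l - 1)) *ᵥ z₀ with hv_def
      have hveq : Bc *ᵥ v = μ • v := by
        have h0 : (Bc - μ • 1) *ᵥ v = 0 := by
          rw [hv_def, Matrix.mulVec_mulVec, ← pow_succ', Nat.sub_add_cancel hlpos]
          exact hl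
        rw [Matrix.sub_mulVec] at h0
        have : (μ • (1 : Matrix (Fin n) (Fin n) ℂ)) *ᵥ v = μ • v := by
          rw [Matrix.smul_mulVec, Matrix.one_mulVec]
        rw [this] at h0
        linear_combination (norm := module) h0
      have hμre : μ.re < 0 :=
        re_neg_of_eigen A P α hm hPsymm hPpos hα hineq μ v hprev hveq
      -- now every generalized eigenvector decays
      intro w hw
      obtain ⟨k, hk⟩ := (f.mem_maxGenEigenspace μ w).mp hw
      rw [hpow] at hk
      exact gen_eig_decay Bc μ hμre w k hk
  have hc := htop (fun i => (x i : ℂ))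
  rw [tendsto_pi_nhds]
  intro i
  have hci : Tendsto (fun t : ℝ => (exp ((t : ℂ) • Bc) *ᵥ (fun i => (x i : ℂ))) i)
      atTop (𝓝 0) := (tendsto_pi_nhds.mp hc) i
  have hre := (Complex.continuous_re.tendsto 0).comp hci
  simp only [Complex.zero_re] at hre
  refine hre.congr fun t => ?_
  have hMv : (exp ((t : ℂ) • Bc) *ᵥ (fun i => (x i : ℂ))) i
      = (((exp (t • A) *ᵥ x) i : ℝ) : ℂ) := by
    rw [← exp_map_ofReal]
    simp [Matrix.mulVec, dotProduct, Matrix.map_apply]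
  show ((exp ((t : ℂ) • Bc) *ᵥ (fun i => (x i : ℂ))) i).re = (exp (t • A) *ᵥ x) i
  rw [hMv, Complex.ofReal_re]
end

section
/- Let A be a real n×n matrix and P a symmetric positive definite n×n matrix such that A^T P + P A ≺ 0. Then for every δ > 0, exp(A^T δ) P exp(A δ) ≺ P. -/
open Matrix NormedSpace

private lemma dot_aux {n : ℕ} (B C : Matrix (Fin n) (Fin n) ℝ) (x : Fin n → ℝ) :
    x ⬝ᵥ (Bᵀ * C).mulVec x = B.mulVec x ⬝ᵥ C.mulVec x := by
  rw [← Matrix.mulVec_mulVec, Matrix.dotProduct_mulVec, Matrix.vecMul_transpose]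

section Aux

attribute [local instance] Matrix.linftyOpNormedAddCommGroup Matrix.linftyOpNormedRing
  Matrix.linftyOpNormedAlgebra

/-- The quadratic form map `M ↦ x ⬝ᵥ M *ᵥ x` as a linear map in `M`. -/
private def quadL {n : ℕ} (x : Fin n → ℝ) : Matrix (Fin n) (Fin n) ℝ →ₗ[ℝ] ℝ where
  toFun M := x ⬝ᵥ M.mulVec x
  map_add' M N := by simp [Matrix.add_mulVec]
  map_smul' c M := by simp [Matrix.smul_mulVec]

private lemma quad_decay {n : ℕ} (A P : Matrix (Fin n) (Fin n) ℝ)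
    (hlyap : (-(Aᵀ * P + P * A)).PosDef) (x : Fin n → ℝ) (hx : x ≠ 0)
    {δ : ℝ} (hδ : 0 < δ) :
    x ⬝ᵥ (exp (δ • Aᵀ) * P * exp (δ • A)).mulVec x < x ⬝ᵥ P.mulVec x := by
  classical
  set g : ℝ → ℝ := fun t => x ⬝ᵥ (exp (t • Aᵀ) * P * exp (t • A)).mulVec x with hg
  have key : ∀ t : ℝ, HasDerivAt g
      (x ⬝ᵥ ((Aᵀ * exp (t • Aᵀ) * P) * exp (t • A)
        + exp (t • Aᵀ) * P * (A * exp (t • A))).mulVec x) t := by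
    intro t
    have h1 : HasDerivAt (fun s : ℝ => exp (s • Aᵀ)) (Aᵀ * exp (t • Aᵀ)) t :=
      hasDerivAt_exp_smul_const' Aᵀ t
    have h2 : HasDerivAt (fun s : ℝ => exp (s • A)) (A * exp (t • A)) t :=
      hasDerivAt_exp_smul_const' A t
    have hF := (h1.mul_const P).mul h2
    exact ((quadL x).toContinuousLinearMap.hasFDerivAt).comp_hasDerivAt t hF
  have hneg : ∀ t : ℝ, deriv g t < 0 := by
    intro t
    rw [(key t).deriv]
    set E : Matrix (Fin n) (Fin n) ℝ := exp (t • A) with hEdef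
    set u : Fin n → ℝ := E.mulVec x with hu
    have hET : exp (t • Aᵀ) = Eᵀ := by
      rw [hEdef, ← Matrix.transpose_smul, Matrix.exp_transpose]
    have hcomm : A * E = E * A :=
      (((Commute.refl A).smul_right t).exp_right)
    have hu0 : u ≠ 0 := by
      intro h
      have hunit : IsUnit E.det :=
        (Matrix.isUnit_iff_isUnit_det _).mp (Matrix.isUnit_exp _)
      apply hx
      have : (E⁻¹).mulVec u = x := by
        rw [hu, Matrix.mulVec_mulVec, Matrix.nonsing_inv_mul _ hunit, Matrix.one_mulVec]
      rw [← this, h, Matrix.mulVec_zero]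
    have e1 : x ⬝ᵥ ((Aᵀ * exp (t • Aᵀ) * P) * E).mulVec x = u ⬝ᵥ (Aᵀ * P).mulVec u := by
      have hcommT : Aᵀ * Eᵀ = Eᵀ * Aᵀ := by
        have h := congrArg Matrix.transpose hcomm
        simpa [Matrix.transpose_mul] using h.symm
      have : Aᵀ * exp (t • Aᵀ) * P * E = (A * E)ᵀ * (P * E) := by
        rw [hET, Matrix.transpose_mul, ← hcommT, Matrix.mul_assoc]
      rw [this, dot_aux, dot_aux]
      simp [hu, Matrix.mulVec_mulVec]
    have e2 : x ⬝ᵥ (exp (t • Aᵀ) * P * (A * E)).mulVec x = u ⬝ᵥ (P * A).mulVec u := by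
      have : exp (t • Aᵀ) * P * (A * E) = Eᵀ * (P * A * E) := by
        rw [hET]; noncomm_ring
      rw [this, dot_aux]
      simp [hu, Matrix.mulVec_mulVec]
    rw [Matrix.add_mulVec, dotProduct_add, e1, e2, ← dotProduct_add, ← Matrix.add_mulVec]
    have hpos := hlyap.dotProduct_mulVec_pos hu0
    rw [star_trivial] at hpos
    have : u ⬝ᵥ (-(Aᵀ * P + P * A)).mulVec u = -(u ⬝ᵥ (Aᵀ * P + P * A).mulVec u) := by
      rw [Matrix.neg_mulVec, dotProduct_neg]
    linarith [this ▸ hpos]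
  have hanti : StrictAnti g := strictAnti_of_deriv_neg hneg
  have h0 : g 0 = x ⬝ᵥ P.mulVec x := by
    simp [hg, exp_zero]
  have := hanti hδ
  rw [h0] at this
  exact this

end Aux

/-- a strict quadratic Lyapunov inequality `Aᵀ P + P A ≺ 0` implies
strict contraction of the quadratic form under the flow map:
`exp(Aᵀδ) P exp(Aδ) ≺ P` for every `δ > 0`. -/
theorem lyapunov_implies_flow_contraction
    (n : ℕ) (A P : Matrix (Fin n) (Fin n) ℝ)
    (hPsymm : P.IsSymm) (hPpos : P.PosDef)
    (hlyap : (-(Aᵀ * P + P * A)).PosDef) :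
    ∀ δ : ℝ, 0 < δ →
      (P - exp (δ • Aᵀ) * P * exp (δ • A)).PosDef := by
  intro δ hδ
  have hET : exp (δ • Aᵀ) = (exp (δ • A))ᵀ := by
    rw [← Matrix.transpose_smul, Matrix.exp_transpose]
  refine Matrix.PosDef.of_dotProduct_mulVec_pos ?_ ?_
  · show (P - exp (δ • Aᵀ) * P * exp (δ • A))ᴴ = _
    have hPh : Pᴴ = P := hPpos.1
    simp only [Matrix.conjTranspose_sub, Matrix.conjTranspose_mul, hPh]
    rw [hET]
    congr 1
    have : ∀ M : Matrix (Fin n) (Fin n) ℝ, Mᴴ = Mᵀ := fun M => rfl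
    simp only [this, Matrix.transpose_transpose]
    noncomm_ring
  · intro x hx
    rw [star_trivial, Matrix.sub_mulVec, dotProduct_sub, sub_pos]
    exact quad_decay A P hlyap x hx hδ
end

section
/- Let A_1, …, A_N be real n×n matrices and τ ≥ 0. If the bilinear matrix inequality conditions are feasible for a positive integer m — i.e. there exist symmetric positive definite matrices P_{i,r} (r = 1,…,m), scalars α_{irs} > 0, and scalars γ_{jqirs} ≥ 0 with Σ_{s=1}^m γ_{jqirs} < 1 such that A_i^T P_{i,r} + P_{i,r} A_i ≺ Σ_{s≠r} α_{irs} (P_{i,s} − P_{i,r}) for all i, r, and exp(A_i^T τ) P_{j,q} exp(A_i τ) ≺ P_{i,r} + Σ_{s≠r} γ_{jqirs} (P_{i,s} − P_{i,r}) for all i ≠ j and all q, r — then they are also feasible for m + 1; in particular, a feasible solution for m + 1 is obtained by setting P_{i,m+1} = P_{i,m} for every i and keeping the remaining matrices unchanged (with suitable multiplier scalars). -/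
open Matrix NormedSpace

def dupIdx {m : ℕ} (hm : 0 < m) (s : Fin (m + 1)) : Fin m :=
  ⟨min s.1 (m - 1), by have := s.2; omega⟩

lemma dupIdx_castSucc {m : ℕ} (hm : 0 < m) (s : Fin m) :
    dupIdx hm s.castSucc = s := by
  have := s.2
  simp only [dupIdx, Fin.ext_iff, Fin.coe_castSucc]
  omega

lemma dupIdx_last {m : ℕ} (hm : 0 < m) :
    dupIdx hm (Fin.last m) = ⟨m - 1, by omega⟩ := by
  simp only [dupIdx, Fin.ext_iff, Fin.val_last]
  omega

lemma aux_sum {V : Type*} [AddCommGroup V] [Module ℝ V] {m : ℕ} (hm : 0 < m)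
    (c : Fin m → ℝ) (M : Fin m → V) :
    ∑ s : Fin (m + 1),
      ((if (m - 1 : ℕ) ≤ s.1 then (1 / 2 : ℝ) else 1) * c (dupIdx hm s)) • M (dupIdx hm s)
      = ∑ t, c t • M t := by
  rw [Fin.sum_univ_castSucc]
  set l : Fin m := ⟨m - 1, by omega⟩ with hl
  have hlast : dupIdx hm (Fin.last m) = l := dupIdx_last hm
  have h1 : ∑ s : Fin m,
      ((if (m - 1 : ℕ) ≤ (s.castSucc : Fin (m+1)).1 then (1 / 2 : ℝ) else 1) *
        c (dupIdx hm s.castSucc)) • M (dupIdx hm s.castSucc)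
      = ∑ s ∈ Finset.univ.erase l, c s • M s + ((1/2) * c l) • M l := by
    rw [← Finset.sum_erase_add _ _ (Finset.mem_univ l)]
    congr 1
    · apply Finset.sum_congr rfl
      intro s hs
      have hsne : s ≠ l := (Finset.mem_erase.mp hs).1
      have hs2 := s.2
      have hcond : ¬ ((m - 1 : ℕ) ≤ (s.castSucc : Fin (m+1)).1) := by
        simp only [Fin.coe_castSucc]
        have : s.1 ≠ m - 1 := fun h => hsne (Fin.ext h)
        omega
      rw [dupIdx_castSucc hm, if_neg hcond, one_mul]
    · have hcond : (m - 1 : ℕ) ≤ (l.castSucc : Fin (m+1)).1 := by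
        simp [Fin.coe_castSucc]
        show m ≤ m - 1 + 1
        omega
      rw [dupIdx_castSucc hm, if_pos hcond]
  rw [h1, hlast]
  have hcond : (m - 1 : ℕ) ≤ (Fin.last m).1 := by simp [Fin.val_last]
  rw [if_pos hcond]
  rw [add_assoc, ← add_smul]
  have : 1 / 2 * c l + 1 / 2 * c l = c l := by ring
  rw [this, Finset.sum_erase_add _ _ (Finset.mem_univ l)]

/-- Lemma 1 of the paper: if the BMI dwell-time conditions are
feasible with `m` quadratic pieces, they are feasible with `m + 1` pieces; in
particular a feasible solution is obtained by duplicating the last matrix,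
`P_{i,m+1} = P_{i,m}`, keeping the remaining matrices unchanged. -/
theorem bmi_conditions_feasible_succ
    (n N m : ℕ) (hm : 0 < m) (A : Fin N → Matrix (Fin n) (Fin n) ℝ)
    (τ : ℝ) (hτ : 0 ≤ τ)
    (P : Fin N → Fin m → Matrix (Fin n) (Fin n) ℝ)
    (α : Fin N → Fin m → Fin m → ℝ)
    (γ : Fin N → Fin m → Fin N → Fin m → Fin m → ℝ)
    (hPsymm : ∀ i r, (P i r).IsSymm)
    (hPpos : ∀ i r, (P i r).PosDef)
    (hα : ∀ i r s, 0 < α i r s)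
    (hγ : ∀ j q i r s, 0 ≤ γ j q i r s)
    (hγsum : ∀ j q i r, ∑ s, γ j q i r s < 1)
    (hder : ∀ i r,
      ((∑ s ∈ Finset.univ.erase r, α i r s • (P i s - P i r)) -
        ((A i)ᵀ * P i r + P i r * A i)).PosDef)
    (hjump : ∀ i j, i ≠ j → ∀ q r,
      ((P i r + ∑ s ∈ Finset.univ.erase r, γ j q i r s • (P i s - P i r)) -
        (exp (τ • (A i)ᵀ) * P j q * exp (τ • A i))).PosDef) :
    -- the extension `P'` duplicates the last matrix: `P'_{i,r} = P_{i,r}` for `r ≤ m`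
    -- and `P'_{i,m+1} = P_{i,m}`
    ∃ (α' : Fin N → Fin (m + 1) → Fin (m + 1) → ℝ)
      (γ' : Fin N → Fin (m + 1) → Fin N → Fin (m + 1) → Fin (m + 1) → ℝ),
      (∀ i r s, 0 < α' i r s) ∧
      (∀ j q i r s, 0 ≤ γ' j q i r s) ∧
      (∀ j q i r, ∑ s, γ' j q i r s < 1) ∧
      (let P' : Fin N → Fin (m + 1) → Matrix (Fin n) (Fin n) ℝ :=
        fun i r => P i ⟨min r.1 (m - 1), by omega⟩
      (∀ i r, (P' i r).IsSymm) ∧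
      (∀ i r, (P' i r).PosDef) ∧
      (∀ i r,
        ((∑ s ∈ Finset.univ.erase r, α' i r s • (P' i s - P' i r)) -
          ((A i)ᵀ * P' i r + P' i r * A i)).PosDef) ∧
      (∀ i j, i ≠ j → ∀ q r,
        ((P' i r + ∑ s ∈ Finset.univ.erase r, γ' j q i r s • (P' i s - P' i r)) -
          (exp (τ • (A i)ᵀ) * P' j q * exp (τ • A i))).PosDef)) := by
  refine ⟨fun i r s => (if (m - 1 : ℕ) ≤ s.1 then (1 / 2 : ℝ) else 1) *
      α i (dupIdx hm r) (dupIdx hm s),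
    fun j q i r s => (if (m - 1 : ℕ) ≤ s.1 then (1 / 2 : ℝ) else 1) *
      γ j (dupIdx hm q) i (dupIdx hm r) (dupIdx hm s),
    ?_, ?_, ?_, ?_⟩
  · intro i r s
    exact mul_pos (by split_ifs <;> norm_num) (hα _ _ _)
  · intro j q i r s
    exact mul_nonneg (by split_ifs <;> norm_num) (hγ _ _ _ _ _)
  · intro j q i r
    have h := aux_sum (V := ℝ) hm (γ j (dupIdx hm q) i (dupIdx hm r)) (fun _ => (1 : ℝ))
    simp only [smul_eq_mul, mul_one] at h
    rw [h]
    exact hγsum j (dupIdx hm q) i (dupIdx hm r)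
  · intro P'
    have hP' : ∀ i r, P' i r = P i (dupIdx hm r) := fun i r => rfl
    refine ⟨fun i r => hPsymm i _, fun i r => hPpos i _, ?_, ?_⟩
    · intro i r
      set ρ := dupIdx hm r
      have key : (∑ s ∈ Finset.univ.erase r,
          ((if (m - 1 : ℕ) ≤ s.1 then (1 / 2 : ℝ) else 1) * α i ρ (dupIdx hm s)) •
            (P' i s - P' i r))
          = ∑ t ∈ Finset.univ.erase ρ, α i ρ t • (P i t - P i ρ) :=
        calc _ = ∑ s : Fin (m + 1),
              ((if (m - 1 : ℕ) ≤ s.1 then (1 / 2 : ℝ) else 1) * α i ρ (dupIdx hm s)) •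
                (P' i s - P' i r) :=
            Finset.sum_erase _ (by rw [sub_self, smul_zero])
          _ = ∑ t, α i ρ t • (P i t - P i ρ) :=
            aux_sum hm (α i ρ) (fun t => P i t - P i ρ)
          _ = _ := (Finset.sum_erase _ (by rw [sub_self, smul_zero])).symm
      rw [key]
      exact hder i ρ
    · intro i j hij q r
      set ρ := dupIdx hm r
      have key : (∑ s ∈ Finset.univ.erase r,
          ((if (m - 1 : ℕ) ≤ s.1 then (1 / 2 : ℝ) else 1) * γ j (dupIdx hm q) i ρ (dupIdx hm s)) •
            (P' i s - P' i r))
          = ∑ t ∈ Finset.univ.erase ρ, γ j (dupIdx hm q) i ρ t • (P i t - P i ρ) :=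
        calc _ = ∑ s : Fin (m + 1),
              ((if (m - 1 : ℕ) ≤ s.1 then (1 / 2 : ℝ) else 1) *
                γ j (dupIdx hm q) i ρ (dupIdx hm s)) • (P' i s - P' i r) :=
            Finset.sum_erase _ (by rw [sub_self, smul_zero])
          _ = ∑ t, γ j (dupIdx hm q) i ρ t • (P i t - P i ρ) :=
            aux_sum hm (γ j (dupIdx hm q) i ρ) (fun t => P i t - P i ρ)
          _ = _ := (Finset.sum_erase _ (by rw [sub_self, smul_zero])).symm
      rw [key]
      exact hjump i j hij (dupIdx hm q) ρ
end

section
/- Let A_1, …, A_N be real n×n matrices. For each positive integer m, let F_m ⊆ ℝ denote the set of τ ≥ 0 for which the bilinear matrix inequality conditions with m quadratic forms are feasible, and define τ_[m] := inf F_m (with inf ∅ = +∞). Then: (a) F_m ⊆ F_{m+1} for every m, hence the sequence (τ_[m]) is non-increasing; (b) each F_m is upward closed in [0, ∞), i.e. if τ ∈ F_m and δ ≥ 0 then τ + δ ∈ F_m; and (c) if some F_m is nonempty, the sequence (τ_[m]) is bounded below by 0 and therefore converges to a limit τ̄ = lim_{m→∞} τ_[m]. -/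
open Matrix NormedSpace

/-- Feasibility of the BMI dwell-time conditions with `m` quadratic pieces at
dwell time `τ ≥ 0`. -/
def BMIFeasible {n N : ℕ} (A : Fin N → Matrix (Fin n) (Fin n) ℝ) (m : ℕ) (τ : ℝ) :
    Prop :=
  0 ≤ τ ∧
  ∃ (P : Fin N → Fin m → Matrix (Fin n) (Fin n) ℝ)
    (α : Fin N → Fin m → Fin m → ℝ)
    (γ : Fin N → Fin m → Fin N → Fin m → Fin m → ℝ),
    (∀ i r, (P i r).IsSymm) ∧ (∀ i r, (P i r).PosDef) ∧
    (∀ i r s, 0 < α i r s) ∧ (∀ j q i r s, 0 ≤ γ j q i r s) ∧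
    (∀ j q i r, ∑ s, γ j q i r s < 1) ∧
    (∀ i r,
      ((∑ s ∈ Finset.univ.erase r, α i r s • (P i s - P i r)) -
        ((A i)ᵀ * P i r + P i r * A i)).PosDef) ∧
    (∀ i j, i ≠ j → ∀ q r,
      ((P i r + ∑ s ∈ Finset.univ.erase r, γ j q i r s • (P i s - P i r)) -
        (exp (τ • (A i)ᵀ) * P j q * exp (τ • A i))).PosDef)

/-- `τ_[m] = inf F_m`, computed in `EReal` so that `inf ∅ = +∞`. -/
noncomputable def tauBound {n N : ℕ} (A : Fin N → Matrix (Fin n) (Fin n) ℝ)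
    (m : ℕ) : EReal :=
  sInf ((fun τ : ℝ => (τ : EReal)) '' {τ : ℝ | BMIFeasible A m τ})

/-! ### Auxiliary material -/

namespace BMIAux

attribute [local instance] Matrix.linftyOpNormedRing Matrix.linftyOpNormedAlgebra

variable {n m : ℕ}

lemma star_vec {k : ℕ} (x : Fin k → ℝ) : star x = x :=
  funext fun a => star_trivial (x a)

/-- Apply a continuous linear map to the matrix exponential series. -/
lemma clm_exp {E : Type*} [NormedAddCommGroup E] [NormedSpace ℝ E]
    (L : Matrix (Fin m) (Fin m) ℝ →L[ℝ] E) (M : Matrix (Fin m) (Fin m) ℝ) :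
    L (exp M) = ∑' k : ℕ, (k.factorial : ℝ)⁻¹ • L (M ^ k) := by
  rw [exp_eq_tsum ℝ, L.map_tsum (expSeries_summable' (𝕂 := ℝ) M)]
  simp only [_root_.map_smul]

lemma clm_exp_summable {E : Type*} [NormedAddCommGroup E] [NormedSpace ℝ E]
    (L : Matrix (Fin m) (Fin m) ℝ →L[ℝ] E) (M : Matrix (Fin m) (Fin m) ℝ) :
    Summable fun k : ℕ => (k.factorial : ℝ)⁻¹ • L (M ^ k) := by
  have h2 := ((expSeries_summable' (𝕂 := ℝ) M).map L L.continuous)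
  have he : (⇑L ∘ fun k : ℕ => (k.factorial : ℝ)⁻¹ • M ^ k)
      = fun k : ℕ => (k.factorial : ℝ)⁻¹ • L (M ^ k) := by
    funext k; simp [Function.comp, _root_.map_smul]
  rwa [he] at h2

lemma pow_entry_nonneg {M : Matrix (Fin m) (Fin m) ℝ} (h : ∀ a b, 0 ≤ M a b) (k : ℕ) :
    ∀ a b, 0 ≤ (M ^ k) a b := by
  induction k with
  | zero =>
    intro a b
    by_cases hab : a = b <;> simp [pow_zero, Matrix.one_apply, hab]
  | succ k ih =>
    intro a b
    rw [pow_succ, Matrix.mul_apply]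
    exact Finset.sum_nonneg fun u _ => mul_nonneg (ih a u) (h u b)

/-- Matrix entry as a continuous linear map. -/
noncomputable def entryCLM (a b : Fin m) : Matrix (Fin m) (Fin m) ℝ →L[ℝ] ℝ :=
  LinearMap.toContinuousLinearMap
    { toFun := fun M => M a b
      map_add' := fun _ _ => rfl
      map_smul' := fun _ _ => rfl }

@[simp] lemma entryCLM_apply (a b : Fin m) (M : Matrix (Fin m) (Fin m) ℝ) :
    entryCLM a b M = M a b := rfl

lemma exp_entry_nonneg_of_nonneg {M : Matrix (Fin m) (Fin m) ℝ}
    (h : ∀ a b, 0 ≤ M a b) (a b : Fin m) : 0 ≤ exp M a b := by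
  have h1 := clm_exp (entryCLM a b) M
  simp only [entryCLM_apply] at h1
  rw [h1]
  exact tsum_nonneg fun k =>
    smul_nonneg (by positivity) (pow_entry_nonneg h k a b)

lemma one_le_exp_entry_diag {M : Matrix (Fin m) (Fin m) ℝ}
    (h : ∀ a b, 0 ≤ M a b) (a : Fin m) : 1 ≤ exp M a a := by
  have h1 := clm_exp (entryCLM a a) M
  simp only [entryCLM_apply] at h1
  rw [h1]
  have hs := clm_exp_summable (entryCLM a a) M
  simp only [entryCLM_apply] at hs
  have h0 : ((Nat.factorial 0 : ℝ))⁻¹ • ((M ^ 0) a a) = 1 := by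
    simp [Matrix.one_apply]
  calc (1 : ℝ) = (Nat.factorial 0 : ℝ)⁻¹ • ((M ^ 0) a a) := h0.symm
    _ ≤ _ := Summable.le_tsum hs 0 fun k _ =>
        smul_nonneg (by positivity) (pow_entry_nonneg h k a a)

/-- For a Metzler matrix (nonnegative off-diagonal entries), the exponential has
nonnegative entries and positive diagonal entries. -/
lemma exp_metzler {M : Matrix (Fin m) (Fin m) ℝ} (h : ∀ a b, a ≠ b → 0 ≤ M a b) :
    (∀ a b, 0 ≤ exp M a b) ∧ ∀ a, 0 < exp M a a := by
  set c : ℝ := ∑ u, |M u u| with hc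
  have hc0 : ∀ a, |M a a| ≤ c := fun a =>
    Finset.single_le_sum (f := fun u => |M u u|) (fun u _ => abs_nonneg _) (Finset.mem_univ a)
  have hMcnn : ∀ a b, 0 ≤ (M + c • (1 : Matrix (Fin m) (Fin m) ℝ)) a b := by
    intro a b
    by_cases hab : a = b
    · subst hab
      simp only [Matrix.add_apply, Matrix.smul_apply, Matrix.one_apply_eq, smul_eq_mul, mul_one]
      have := neg_abs_le (M a a)
      linarith [hc0 a]
    · simp only [Matrix.add_apply, Matrix.smul_apply, Matrix.one_apply_ne hab, smul_eq_mul,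
        mul_zero, add_zero]
      exact h a b hab
  set Mc := M + c • (1 : Matrix (Fin m) (Fin m) ℝ) with hMcdef
  have hcomm : Commute Mc ((-c) • (1 : Matrix (Fin m) (Fin m) ℝ)) :=
    (Commute.one_right Mc).smul_right (-c)
  have hM : M = Mc + (-c) • (1 : Matrix (Fin m) (Fin m) ℝ) := by
    rw [hMcdef, neg_smul]; abel
  have hexp1 : exp ((-c) • (1 : Matrix (Fin m) (Fin m) ℝ))
      = Real.exp (-c) • (1 : Matrix (Fin m) (Fin m) ℝ) := by
    rw [Matrix.smul_one_eq_diagonal, Matrix.exp_diagonal]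
    have hd : (exp fun _ : Fin m => (-c : ℝ)) = fun _ : Fin m => Real.exp (-c) := by
      funext i
      rw [Real.exp_eq_exp_ℝ]
      exact Pi.coe_exp _ i
    rw [hd, ← Matrix.smul_one_eq_diagonal]
  have hsplit : exp M = Real.exp (-c) • exp Mc := by
    rw [hM, Matrix.exp_add_of_commute _ _ hcomm, hexp1, mul_smul_comm, mul_one]
  constructor
  · intro a b
    rw [hsplit]
    simp only [Matrix.smul_apply, smul_eq_mul]
    exact mul_nonneg (Real.exp_nonneg _) (exp_entry_nonneg_of_nonneg hMcnn a b)
  · intro a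
    rw [hsplit]
    simp only [Matrix.smul_apply, smul_eq_mul]
    have := one_le_exp_entry_diag hMcnn a
    nlinarith [Real.exp_pos (-c)]

/-- `vecMul` by a fixed vector as a continuous linear map in the matrix. -/
noncomputable def vecMulCLM (v : Fin m → ℝ) :
    Matrix (Fin m) (Fin m) ℝ →L[ℝ] (Fin m → ℝ) :=
  LinearMap.toContinuousLinearMap
    { toFun := fun M => v ᵥ* M
      map_add' := fun X Y => by
        funext j
        simp [Matrix.vecMul, dotProduct, Matrix.add_apply, mul_add, Finset.sum_add_distrib]
      map_smul' := fun r X => by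
        funext j
        simp [Matrix.vecMul, dotProduct, Matrix.smul_apply, Finset.mul_sum, mul_left_comm] }

@[simp] lemma vecMulCLM_apply (v : Fin m → ℝ) (M : Matrix (Fin m) (Fin m) ℝ) :
    vecMulCLM v M = v ᵥ* M := rfl

lemma vecMul_exp_of_vecMul_eq_zero {M : Matrix (Fin m) (Fin m) ℝ} {v : Fin m → ℝ}
    (hv : v ᵥ* M = 0) : v ᵥ* exp M = v := by
  have h1 := clm_exp (vecMulCLM v) M
  simp only [vecMulCLM_apply] at h1
  have hz : ∀ k : ℕ, k ≠ 0 → (k.factorial : ℝ)⁻¹ • (v ᵥ* (M ^ k)) = 0 := by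
    intro k hk
    obtain ⟨k, rfl⟩ := Nat.exists_eq_succ_of_ne_zero hk
    have : v ᵥ* M ^ (k + 1) = 0 := by
      rw [pow_succ', ← Matrix.vecMul_vecMul, hv, Matrix.zero_vecMul]
    rw [this, smul_zero]
  rw [h1, tsum_eq_single 0 hz]
  simp [Matrix.vecMul_one]

/-! ### Reindexing sums through the retraction `Fin (m+1) → Fin m` -/

/-- Retraction `Fin (m+1) → Fin m` collapsing the last index onto `0`. -/
def emap (hm : 0 < m) (r : Fin (m + 1)) : Fin m :=
  if h : (r : ℕ) < m then ⟨r, h⟩ else ⟨0, hm⟩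

lemma emap_sec (hm : 0 < m) (j : Fin m) :
    emap hm ⟨(j : ℕ), Nat.lt_succ_of_lt j.isLt⟩ = j := by
  simp [emap, j.isLt]

/-- The cardinality of each fiber of `emap`, as a real number. -/
noncomputable def fibcard (hm : 0 < m) (j : Fin m) : ℝ :=
  ((Finset.univ.filter (fun u : Fin (m + 1) => emap hm u = j)).card : ℝ)

lemma fibcard_pos (hm : 0 < m) (j : Fin m) : 0 < fibcard hm j := by
  have : (⟨(j : ℕ), Nat.lt_succ_of_lt j.isLt⟩ : Fin (m + 1)) ∈
      Finset.univ.filter (fun u : Fin (m + 1) => emap hm u = j) := by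
    simp [Finset.mem_filter, emap_sec]
  have h := Finset.card_pos.2 ⟨_, this⟩
  unfold fibcard
  exact_mod_cast h

lemma reindex_sum (hm : 0 < m) {M : Type*} [AddCommGroup M] [Module ℝ M]
    (w : Fin m → ℝ) (v : Fin m → M) (r : Fin (m + 1)) (hv : v (emap hm r) = 0)
    (cdef : Fin (m + 1) → ℝ)
    (hc : ∀ s, emap hm s ≠ emap hm r → cdef s = w (emap hm s) / fibcard hm (emap hm s)) :
    ∑ s ∈ Finset.univ.erase r, cdef s • v (emap hm s) = ∑ j, w j • v j := by
  have key : ∀ s ∈ Finset.univ.erase r, cdef s • v (emap hm s)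
      = (fun j => (w j / fibcard hm j) • v j) (emap hm s) := by
    intro s _
    by_cases hs : emap hm s = emap hm r
    · rw [hs, hv, smul_zero]; simp [hv]
    · rw [hc s hs]
  rw [Finset.sum_congr rfl key,
    ← Finset.sum_fiberwise' (Finset.univ.erase r) (emap hm)
      (fun j => (w j / fibcard hm j) • v j)]
  refine Finset.sum_congr rfl fun j _ => ?_
  rw [Finset.sum_const]
  by_cases hj : j = emap hm r
  · subst hj; rw [hv, smul_zero, smul_zero, smul_zero]
  · have hcard : (Finset.univ.erase r).filter (fun u => emap hm u = j)
        = Finset.univ.filter (fun u : Fin (m + 1) => emap hm u = j) := by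
      ext u
      simp only [Finset.mem_filter, Finset.mem_erase, Finset.mem_univ, true_and, and_true]
      constructor
      · exact fun h => h.2
      · intro hu
        refine ⟨fun hur => hj ?_, hu⟩
        rw [← hu, hur]
    rw [hcard]
    have hk : fibcard hm j ≠ 0 := ne_of_gt (fibcard_pos hm j)
    rw [← Nat.cast_smul_eq_nsmul ℝ, smul_smul,
      show ((Finset.univ.filter (fun u : Fin (m + 1) => emap hm u = j)).card : ℝ)
        = fibcard hm j from rfl, mul_div_cancel₀ (w j) hk]

lemma reindex_sum_scalar (hm : 0 < m) (w : Fin m → ℝ) (r : Fin (m + 1)) :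
    ∑ s : Fin (m + 1),
        (if emap hm s = emap hm r then 0 else w (emap hm s) / fibcard hm (emap hm s))
      = ∑ j ∈ Finset.univ.erase (emap hm r), w j := by
  have key : ∀ s : Fin (m + 1),
      (if emap hm s = emap hm r then (0 : ℝ) else w (emap hm s) / fibcard hm (emap hm s))
      = (fun j => if j = emap hm r then (0 : ℝ) else w j / fibcard hm j) (emap hm s) := by
    intro s; rfl
  rw [Finset.sum_congr rfl (fun s _ => key s),
    ← Finset.sum_fiberwise' Finset.univ (emap hm)
      (fun j => if j = emap hm r then (0 : ℝ) else w j / fibcard hm j)]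
  have step : ∀ j : Fin m,
      (∑ _u ∈ Finset.univ.filter (fun u : Fin (m + 1) => emap hm u = j),
        (if j = emap hm r then (0 : ℝ) else w j / fibcard hm j))
      = (if j = emap hm r then (0 : ℝ) else w j) := by
    intro j
    rw [Finset.sum_const]
    by_cases hj : j = emap hm r
    · simp [hj]
    · rw [if_neg hj, if_neg hj, ← Nat.cast_smul_eq_nsmul ℝ, smul_eq_mul,
        show ((Finset.univ.filter (fun u : Fin (m + 1) => emap hm u = j)).card : ℝ)
          = fibcard hm j from rfl, mul_div_cancel₀ (w j) (ne_of_gt (fibcard_pos hm j))]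
  rw [Finset.sum_congr rfl (fun j _ => step j),
    ← Finset.sum_erase (s := Finset.univ) (a := emap hm r)
      (f := fun j => if j = emap hm r then (0 : ℝ) else w j) (if_pos rfl)]
  exact Finset.sum_congr rfl fun j hj => if_neg (Finset.ne_of_mem_erase hj)

/-! ### Quadratic-form helpers -/

/-- Conic combination of a family of matrices. -/
noncomputable def Qc (P : Fin m → Matrix (Fin n) (Fin n) ℝ) (w : Fin m → ℝ) :
    Matrix (Fin n) (Fin n) ℝ :=
  ∑ s, w s • P s

/-- The Metzler generator built from the scalars `α`. -/
noncomputable def Lmat (α : Fin m → Fin m → ℝ) : Matrix (Fin m) (Fin m) ℝ :=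
  Matrix.of fun s r => if s = r then -∑ u ∈ Finset.univ.erase r, α r u else α r s

lemma Lmat_col (α : Fin m → Fin m → ℝ) (g : Fin m → ℝ) (r : Fin m) :
    ∑ s, Lmat α s r * g s = ∑ s ∈ Finset.univ.erase r, α r s * (g s - g r) := by
  rw [← Finset.add_sum_erase _ _ (Finset.mem_univ r)]
  have h1 : Lmat α r r = -∑ u ∈ Finset.univ.erase r, α r u := if_pos rfl
  have h2 : ∀ s ∈ Finset.univ.erase r, Lmat α s r * g s = α r s * g s := by
    intro s hs
    rw [show Lmat α s r = α r s from if_neg (Finset.ne_of_mem_erase hs)]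
  rw [h1, Finset.sum_congr rfl h2]
  simp only [mul_sub, Finset.sum_sub_distrib, ← Finset.sum_mul]
  ring

lemma quad_sum {ι : Type*} (T : Finset ι) (c : ι → ℝ) (Ms : ι → Matrix (Fin n) (Fin n) ℝ)
    (x : Fin n → ℝ) :
    x ⬝ᵥ (∑ s ∈ T, c s • Ms s) *ᵥ x = ∑ s ∈ T, c s * (x ⬝ᵥ Ms s *ᵥ x) := by
  induction T using Finset.cons_induction with
  | empty => simp
  | cons a T ha ih =>
    rw [Finset.sum_cons, Finset.sum_cons, Matrix.add_mulVec, dotProduct_add, ih,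
      Matrix.smul_mulVec, dotProduct_smul, smul_eq_mul]

lemma quad_conj (B M : Matrix (Fin n) (Fin n) ℝ) (x : Fin n → ℝ) :
    x ⬝ᵥ (Bᵀ * M * B) *ᵥ x = (B *ᵥ x) ⬝ᵥ M *ᵥ (B *ᵥ x) := by
  rw [Matrix.mul_assoc, ← Matrix.mulVec_mulVec, dotProduct_mulVec, Matrix.vecMul_transpose,
    ← Matrix.mulVec_mulVec]

lemma quad_lyap (A M : Matrix (Fin n) (Fin n) ℝ) (x : Fin n → ℝ) :
    x ⬝ᵥ (Aᵀ * M + M * A) *ᵥ x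
      = (A *ᵥ x) ⬝ᵥ M *ᵥ x + x ⬝ᵥ M *ᵥ (A *ᵥ x) := by
  rw [Matrix.add_mulVec, dotProduct_add]
  congr 1
  · rw [← Matrix.mulVec_mulVec, dotProduct_mulVec, Matrix.vecMul_transpose]
  · rw [← Matrix.mulVec_mulVec]

lemma combo_eq (P : Fin m → Matrix (Fin n) (Fin n) ℝ) (w : Fin m → ℝ)
    (hw : ∑ s, w s = 1) (r : Fin m) :
    P r + ∑ s ∈ Finset.univ.erase r, w s • (P s - P r) = Qc P w := by
  have hS : ∑ s ∈ Finset.univ.erase r, w s = 1 - w r := by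
    rw [Finset.sum_erase_eq_sub (Finset.mem_univ r), hw]
  rw [Qc, ← Finset.add_sum_erase _ _ (Finset.mem_univ r)]
  have hsub : ∀ s, w s • (P s - P r) = w s • P s - w s • P r := fun s => smul_sub _ _ _
  rw [Finset.sum_congr rfl fun s _ => hsub s, Finset.sum_sub_distrib]
  have h2 : ∑ s ∈ Finset.univ.erase r, w s • P r = (1 - w r) • P r := by
    rw [← Finset.sum_smul, hS]
  rw [h2, sub_smul, one_smul]
  abel

lemma isHermitian_of_isSymm {k : ℕ} {M : Matrix (Fin k) (Fin k) ℝ} (h : M.IsSymm) :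
    M.IsHermitian := by
  rw [Matrix.IsHermitian, Matrix.conjTranspose_eq_transpose_of_trivial]
  exact h

lemma Qc_isHermitian (P : Fin m → Matrix (Fin n) (Fin n) ℝ)
    (hP : ∀ s, (P s).IsSymm) (w : Fin m → ℝ) : (Qc P w).IsHermitian := by
  refine isHermitian_of_isSymm ?_
  rw [Matrix.IsSymm, Qc, Matrix.transpose_sum]
  exact Finset.sum_congr rfl fun s _ => by rw [Matrix.transpose_smul, hP s]

/-! ### The flow monotonicity lemma -/

/-- `mulVec` by a fixed vector as a continuous linear map in the matrix. -/
noncomputable def mulVecCLM (x : Fin n → ℝ) :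
    Matrix (Fin n) (Fin n) ℝ →L[ℝ] (Fin n → ℝ) :=
  LinearMap.toContinuousLinearMap
    { toFun := fun M => M *ᵥ x
      map_add' := fun X Y => Matrix.add_mulVec X Y x
      map_smul' := fun r X => by
        simp [Matrix.smul_mulVec] }

@[simp] lemma mulVecCLM_apply (x : Fin n → ℝ) (M : Matrix (Fin n) (Fin n) ℝ) :
    mulVecCLM x M = M *ᵥ x := rfl

lemma hasDerivAt_exp_mulVec (A : Matrix (Fin n) (Fin n) ℝ) (x : Fin n → ℝ) (t : ℝ) :
    HasDerivAt (fun u : ℝ => exp (u • A) *ᵥ x) (A *ᵥ (exp (t • A) *ᵥ x)) t := by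
  have h1 := hasDerivAt_exp_smul_const' (𝕂 := ℝ) A t
  have h2 := ((mulVecCLM x).hasFDerivAt (x := exp (t • A))).comp_hasDerivAt t h1
  have h3 : HasDerivAt (fun u : ℝ => exp (u • A) *ᵥ x) ((A * exp (t • A)) *ᵥ x) t := h2
  simpa [Matrix.mulVec_mulVec] using h3

/-- Key monotonicity lemma: flowing forward with `exp (δ • A)` and simultaneously
propagating the weights with the Metzler semigroup only decreases the quadratic form. -/
lemma flow_quad_le (A : Matrix (Fin n) (Fin n) ℝ) (P : Fin m → Matrix (Fin n) (Fin n) ℝ)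
    (α : Fin m → Fin m → ℝ) (hα : ∀ r s, 0 ≤ α r s)
    (hq : ∀ r (v : Fin n → ℝ),
      (A *ᵥ v) ⬝ᵥ (P r) *ᵥ v + v ⬝ᵥ (P r) *ᵥ (A *ᵥ v)
        ≤ ∑ s ∈ Finset.univ.erase r, α r s * (v ⬝ᵥ (P s) *ᵥ v - v ⬝ᵥ (P r) *ᵥ v))
    {δ : ℝ} (hδ : 0 ≤ δ) (μ : Fin m → ℝ) (hμ : ∀ s, 0 ≤ μ s) (x : Fin n → ℝ) :
    (exp (δ • A) *ᵥ x) ⬝ᵥ (Qc P μ) *ᵥ (exp (δ • A) *ᵥ x)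
      ≤ x ⬝ᵥ (Qc P ((exp (δ • Lmat α)) *ᵥ μ)) *ᵥ x := by
  classical
  set y : ℝ → Fin n → ℝ := fun t => exp (t • A) *ᵥ x with hydef
  set ν : ℝ → Fin m → ℝ := fun t => exp ((δ - t) • Lmat α) *ᵥ μ with hνdef
  set g : Fin m → ℝ → ℝ := fun s t => y t ⬝ᵥ (P s) *ᵥ (y t) with hgdef
  set f : ℝ → ℝ := fun t => ∑ s, ν t s * g s t with hfdef
  have hy : ∀ t, HasDerivAt y (A *ᵥ y t) t := fun t => hasDerivAt_exp_mulVec A x t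
  have hν : ∀ t, HasDerivAt ν (-(Lmat α *ᵥ ν t)) t := by
    intro t
    have h1 := hasDerivAt_exp_smul_const' (𝕂 := ℝ) (Lmat α) (δ - t)
    have hinner : HasDerivAt (fun u : ℝ => δ - u) (-1) t := (hasDerivAt_id t).const_sub δ
    have h2 := h1.scomp t hinner
    have h3 := ((mulVecCLM μ).hasFDerivAt
      (x := exp ((δ - t) • Lmat α))).comp_hasDerivAt t h2
    have h4 : HasDerivAt ν
        (mulVecCLM μ ((-1 : ℝ) • (Lmat α * exp ((δ - t) • Lmat α)))) t := h3
    have h5 : mulVecCLM μ ((-1 : ℝ) • (Lmat α * exp ((δ - t) • Lmat α)))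
        = -(Lmat α *ᵥ ν t) := by
      rw [mulVecCLM_apply, Matrix.smul_mulVec, neg_one_smul, ← Matrix.mulVec_mulVec]
    rwa [h5] at h4
  have hg : ∀ s t, HasDerivAt (g s)
      ((A *ᵥ y t) ⬝ᵥ (P s) *ᵥ y t + y t ⬝ᵥ (P s) *ᵥ (A *ᵥ y t)) t := by
    intro s t
    have hyc : ∀ a, HasDerivAt (fun t => y t a) ((A *ᵥ y t) a) t :=
      fun a => hasDerivAt_pi.1 (hy t) a
    have hsum : HasDerivAt (fun t => ∑ a, ∑ b, y t a * (P s a b * y t b))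
        (∑ a, ∑ b, ((A *ᵥ y t) a * (P s a b * y t b)
          + y t a * (P s a b * (A *ᵥ y t) b))) t := by
      refine HasDerivAt.fun_sum fun a _ => HasDerivAt.fun_sum fun b _ => ?_
      have := (hyc a).mul ((hyc b).const_mul (P s a b))
      exact this
    have e1 : (fun t => ∑ a, ∑ b, y t a * (P s a b * y t b)) = g s := by
      funext t
      simp [hgdef, dotProduct, Matrix.mulVec, Finset.mul_sum]
    have e2 : (∑ a, ∑ b, ((A *ᵥ y t) a * (P s a b * y t b)
          + y t a * (P s a b * (A *ᵥ y t) b)))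
        = (A *ᵥ y t) ⬝ᵥ (P s) *ᵥ y t + y t ⬝ᵥ (P s) *ᵥ (A *ᵥ y t) := by
      simp [dotProduct, Matrix.mulVec, Finset.mul_sum, Finset.sum_add_distrib]
    rw [← e1, ← e2]
    exact hsum
  have hf : ∀ t, HasDerivAt f
      (∑ s, ((-(Lmat α *ᵥ ν t)) s * g s t
        + ν t s * ((A *ᵥ y t) ⬝ᵥ (P s) *ᵥ y t + y t ⬝ᵥ (P s) *ᵥ (A *ᵥ y t)))) t :=
    fun t => HasDerivAt.fun_sum fun s _ =>
      (hasDerivAt_pi.1 (hν t) s).mul (hg s t)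
  have hνnn : ∀ t, t ≤ δ → ∀ s, 0 ≤ ν t s := by
    intro t ht s
    have hent := (exp_metzler (M := (δ - t) • Lmat α) ?_).1
    · have hval : ν t s = ∑ u, exp ((δ - t) • Lmat α) s u * μ u := rfl
      rw [hval]
      exact Finset.sum_nonneg fun u _ => mul_nonneg (hent s u) (hμ u)
    · intro a b hab
      have : ((δ - t) • Lmat α) a b = (δ - t) * α b a := by
        simp [Lmat, Matrix.smul_apply, hab, Matrix.of_apply]
      rw [this]
      exact mul_nonneg (by linarith) (hα b a)
  have hderiv_nonpos : ∀ t, 0 ≤ t → t ≤ δ →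
      (∑ s, ((-(Lmat α *ᵥ ν t)) s * g s t
        + ν t s * ((A *ᵥ y t) ⬝ᵥ (P s) *ᵥ y t + y t ⬝ᵥ (P s) *ᵥ (A *ᵥ y t)))) ≤ 0 := by
    intro t ht0 htδ
    rw [Finset.sum_add_distrib]
    have hpart1 : ∑ s, (-(Lmat α *ᵥ ν t)) s * g s t
        = -∑ r, ν t r * (∑ s, Lmat α s r * g s t) := by
      have e : ∀ s, (-(Lmat α *ᵥ ν t)) s * g s t
          = -∑ r, ν t r * (Lmat α s r * g s t) := by
        intro s
        have hmv : (Lmat α *ᵥ ν t) s = ∑ r, Lmat α s r * ν t r := rfl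
        rw [Pi.neg_apply, hmv, neg_mul, Finset.sum_mul]
        congr 1
        exact Finset.sum_congr rfl fun r _ => by ring
      rw [Finset.sum_congr rfl fun s _ => e s]
      simp only [Finset.mul_sum, ← Finset.sum_neg_distrib]
      rw [Finset.sum_comm]
    have hpart2 : ∑ s, ν t s * ((A *ᵥ y t) ⬝ᵥ (P s) *ᵥ y t + y t ⬝ᵥ (P s) *ᵥ (A *ᵥ y t))
        ≤ ∑ r, ν t r * (∑ s, Lmat α s r * g s t) := by
      refine Finset.sum_le_sum fun r _ => ?_
      rw [Lmat_col]
      exact mul_le_mul_of_nonneg_left (hq r (y t)) (hνnn t htδ r)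
    rw [hpart1]
    linarith
  have hmono : AntitoneOn f (Set.Icc 0 δ) := by
    refine antitoneOn_of_deriv_nonpos (convex_Icc 0 δ) ?_ ?_ ?_
    · exact (fun t _ => (hf t).differentiableAt.continuousAt.continuousWithinAt)
    · exact fun t _ => (hf t).differentiableAt.differentiableWithinAt
    · intro t ht
      rw [interior_Icc] at ht
      rw [(hf t).deriv]
      exact hderiv_nonpos t ht.1.le ht.2.le
  have hend : f δ ≤ f 0 := hmono (Set.left_mem_Icc.2 hδ) (Set.right_mem_Icc.2 hδ) hδ
  have hy0 : y 0 = x := by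
    rw [hydef]
    simp only [zero_smul, exp_zero, Matrix.one_mulVec]
  have hν0 : ν 0 = exp (δ • Lmat α) *ᵥ μ := by
    rw [hνdef]
    simp only [sub_zero]
  have hyδ : y δ = exp (δ • A) *ᵥ x := rfl
  have hνδ : ν δ = μ := by
    rw [hνdef]
    simp only [sub_self, zero_smul, exp_zero, Matrix.one_mulVec]
  have hf0 : f 0 = x ⬝ᵥ (Qc P ((exp (δ • Lmat α)) *ᵥ μ)) *ᵥ x := by
    have h0 : f 0 = ∑ s, ν 0 s * g s 0 := rfl
    rw [h0, Qc, quad_sum]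
    refine Finset.sum_congr rfl fun s _ => ?_
    have hgs : g s 0 = x ⬝ᵥ P s *ᵥ x := by
      rw [show g s 0 = y 0 ⬝ᵥ P s *ᵥ y 0 from rfl, hy0]
    rw [hgs, hν0]
  have hfδ : f δ = (exp (δ • A) *ᵥ x) ⬝ᵥ (Qc P μ) *ᵥ (exp (δ • A) *ᵥ x) := by
    have h0 : f δ = ∑ s, ν δ s * g s δ := rfl
    rw [h0, Qc, quad_sum]
    refine Finset.sum_congr rfl fun s _ => ?_
    rw [hνδ, show g s δ = y δ ⬝ᵥ P s *ᵥ y δ from rfl, hyδ]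
  rw [← hf0, ← hfδ]
  exact hend

end BMIAux

/-- (a) the feasible sets are nested in `m`, hence `τ_[m]` is
non-increasing; (b) each feasible set is upward closed; (c) if some feasible set is
nonempty, the sequence `τ_[m]` is bounded below by `0` and converges. -/
theorem tauBound_monotone_and_convergent
    (n N : ℕ) (A : Fin N → Matrix (Fin n) (Fin n) ℝ) :
    (∀ m : ℕ, 0 < m →
      {τ : ℝ | BMIFeasible A m τ} ⊆ {τ : ℝ | BMIFeasible A (m + 1) τ}) ∧
    (∀ m : ℕ, 0 < m → tauBound A (m + 1) ≤ tauBound A m) ∧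
    (∀ m : ℕ, 0 < m → ∀ τ : ℝ, BMIFeasible A m τ → ∀ δ : ℝ, 0 ≤ δ →
      BMIFeasible A m (τ + δ)) ∧
    ((∃ m : ℕ, 0 < m ∧ {τ : ℝ | BMIFeasible A m τ}.Nonempty) →
      (∀ m : ℕ, 0 < m → (0 : EReal) ≤ tauBound A m) ∧
      ∃ L : EReal, Filter.Tendsto (fun m : ℕ => tauBound A m)
        Filter.atTop (nhds L)) := by
  classical
  open BMIAux in
  -- Part (a): nesting of the feasible sets
  have partA : ∀ m : ℕ, 0 < m →
      {τ : ℝ | BMIFeasible A m τ} ⊆ {τ : ℝ | BMIFeasible A (m + 1) τ} := by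
    intro m hm τ hmem
    obtain ⟨hτ0, P, α, γ, hsym, hpd, hα, hγ0, hγ1, h1, h2⟩ := hmem
    refine ⟨hτ0, fun j q => P j (emap hm q),
      fun i r s => if emap hm s = emap hm r then 1
        else α i (emap hm r) (emap hm s) / fibcard hm (emap hm s),
      fun j q i r s => if emap hm s = emap hm r then 0
        else γ j (emap hm q) i (emap hm r) (emap hm s) / fibcard hm (emap hm s),
      fun j q => hsym j _, fun j q => hpd j _, ?_, ?_, ?_, ?_, ?_⟩
    · intro i r s
      dsimp only
      by_cases h : emap hm s = emap hm r
      · rw [if_pos h]; exact one_pos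
      · rw [if_neg h]; exact div_pos (hα i _ _) (fibcard_pos hm _)
    · intro j q i r s
      dsimp only
      by_cases h : emap hm s = emap hm r
      · rw [if_pos h]
      · rw [if_neg h]
        exact div_nonneg (hγ0 j _ i _ _) (le_of_lt (fibcard_pos hm _))
    · intro j q i r
      dsimp only
      rw [reindex_sum_scalar hm (γ j (emap hm q) i (emap hm r)) r]
      refine lt_of_le_of_lt (Finset.sum_le_sum_of_subset_of_nonneg
        (Finset.erase_subset _ _) (fun u _ _ => hγ0 j _ i _ u)) (hγ1 j _ i _)
    · intro i r
      dsimp only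
      have hre : ∑ s ∈ Finset.univ.erase r,
          (if emap hm s = emap hm r then (1 : ℝ)
            else α i (emap hm r) (emap hm s) / fibcard hm (emap hm s)) •
            (P i (emap hm s) - P i (emap hm r))
          = ∑ j : Fin m, α i (emap hm r) j • (P i j - P i (emap hm r)) :=
        reindex_sum hm (α i (emap hm r))
          (fun j => P i j - P i (emap hm r)) r (by simp)
          (fun s => if emap hm s = emap hm r then 1
            else α i (emap hm r) (emap hm s) / fibcard hm (emap hm s))
          (fun s hs => if_neg hs)
      rw [hre, ← Finset.sum_erase (s := Finset.univ) (a := emap hm r)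
        (f := fun j => α i (emap hm r) j • (P i j - P i (emap hm r)))
        (by simp only [sub_self, smul_zero])]
      exact h1 i (emap hm r)
    · intro i j hij q r
      dsimp only
      have hre : ∑ s ∈ Finset.univ.erase r,
          (if emap hm s = emap hm r then (0 : ℝ)
            else γ j (emap hm q) i (emap hm r) (emap hm s) / fibcard hm (emap hm s)) •
            (P i (emap hm s) - P i (emap hm r))
          = ∑ s' : Fin m, γ j (emap hm q) i (emap hm r) s' • (P i s' - P i (emap hm r)) :=
        reindex_sum hm (γ j (emap hm q) i (emap hm r))
          (fun s' => P i s' - P i (emap hm r)) r (by simp)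
          (fun s => if emap hm s = emap hm r then 0
            else γ j (emap hm q) i (emap hm r) (emap hm s) / fibcard hm (emap hm s))
          (fun s hs => if_neg hs)
      rw [hre, ← Finset.sum_erase (s := Finset.univ) (a := emap hm r)
        (f := fun s' => γ j (emap hm q) i (emap hm r) s' • (P i s' - P i (emap hm r)))
        (by simp only [sub_self, smul_zero])]
      exact h2 i j hij (emap hm q) (emap hm r)
  -- Part (b): upward closedness
  have partB : ∀ m : ℕ, 0 < m → ∀ τ : ℝ, BMIFeasible A m τ → ∀ δ : ℝ, 0 ≤ δ →
      BMIFeasible A m (τ + δ) := by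
    intro m hm τ hfeas δ hδ
    obtain ⟨hτ0, P, α, γ, hsym, hpd, hα, hγ0, hγ1, h1, h2⟩ := hfeas
    set μ : Fin N → Fin m → Fin N → Fin m → Fin m → ℝ := fun j q i r s =>
      if s = r then 1 - ∑ u ∈ Finset.univ.erase r, γ j q i r u else γ j q i r s with hμdef
    set lam : Fin N → Fin m → Fin N → Fin m → Fin m → ℝ := fun j q i r =>
      exp (δ • Lmat (α i)) *ᵥ μ j q i r with hlamdef
    -- basic facts about μ
    have hγe : ∀ j q i r, ∑ u ∈ Finset.univ.erase r, γ j q i r u < 1 := by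
      intro j q i r
      refine lt_of_le_of_lt (Finset.sum_le_sum_of_subset_of_nonneg
        (Finset.erase_subset _ _) (fun u _ _ => hγ0 j q i r u)) (hγ1 j q i r)
    have hμrr : ∀ j q i r, μ j q i r r = 1 - ∑ u ∈ Finset.univ.erase r, γ j q i r u :=
      fun j q i r => if_pos rfl
    have hμo : ∀ j q i r s, s ≠ r → μ j q i r s = γ j q i r s :=
      fun j q i r s h => if_neg h
    have hμr : ∀ j q i r, 0 < μ j q i r r := by
      intro j q i r
      rw [hμrr]
      linarith [hγe j q i r]
    have hμnn : ∀ j q i r s, 0 ≤ μ j q i r s := by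
      intro j q i r s
      by_cases h : s = r
      · rw [h]; exact le_of_lt (hμr j q i r)
      · rw [hμo j q i r s h]; exact hγ0 j q i r s
    have hμsum : ∀ j q i r, ∑ s, μ j q i r s = 1 := by
      intro j q i r
      rw [← Finset.add_sum_erase _ _ (Finset.mem_univ r), hμrr,
        Finset.sum_congr rfl (fun s hs => hμo j q i r s (Finset.ne_of_mem_erase hs))]
      ring
    -- Metzler facts
    have hMetz : ∀ i : Fin N, ∀ a b, a ≠ b → 0 ≤ (δ • Lmat (α i)) a b := by
      intro i a b hab
      have : (δ • Lmat (α i)) a b = δ * α i b a := by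
        simp [Lmat, Matrix.smul_apply, hab, Matrix.of_apply]
      rw [this]
      exact mul_nonneg hδ (le_of_lt (hα i b a))
    have hEnn : ∀ i : Fin N, ∀ a b, 0 ≤ exp (δ • Lmat (α i)) a b :=
      fun i => (exp_metzler (hMetz i)).1
    have hEdiag : ∀ i : Fin N, ∀ a, 0 < exp (δ • Lmat (α i)) a a :=
      fun i => (exp_metzler (hMetz i)).2
    -- column sums of the semigroup are 1
    have hones : ∀ i : Fin N,
        (fun _ : Fin m => (1 : ℝ)) ᵥ* exp (δ • Lmat (α i)) = fun _ => 1 := by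
      intro i
      refine vecMul_exp_of_vecMul_eq_zero ?_
      funext r
      have hcol : ∑ s, Lmat (α i) s r = 0 := by
        have := Lmat_col (α i) (fun _ => 1) r
        simpa using this
      have : ((fun _ : Fin m => (1 : ℝ)) ᵥ* (δ • Lmat (α i))) r
          = ∑ s, 1 * (δ * Lmat (α i) s r) := rfl
      rw [this]
      simp only [one_mul, ← Finset.mul_sum, hcol, mul_zero]
      rfl
    have hlamval : ∀ j q i r s, lam j q i r s
        = ∑ u, exp (δ • Lmat (α i)) s u * μ j q i r u := fun j q i r s => rfl
    have hlamnn : ∀ j q i r s, 0 ≤ lam j q i r s := by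
      intro j q i r s
      rw [hlamval]
      exact Finset.sum_nonneg fun u _ => mul_nonneg (hEnn i s u) (hμnn j q i r u)
    have hlamsum : ∀ j q i r, ∑ s, lam j q i r s = 1 := by
      intro j q i r
      have h0 : ∑ s, lam j q i r s
          = ∑ u, (∑ s, exp (δ • Lmat (α i)) s u) * μ j q i r u := by
        rw [Finset.sum_congr rfl fun s _ => hlamval j q i r s, Finset.sum_comm]
        exact Finset.sum_congr rfl fun u _ => (Finset.sum_mul _ _ _).symm
      have hcolsum : ∀ u : Fin m, ∑ s, exp (δ • Lmat (α i)) s u = 1 := by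
        intro u
        have := congrFun (hones i) u
        simpa [Matrix.vecMul, dotProduct] using this
      rw [h0, Finset.sum_congr rfl fun u _ => by rw [hcolsum u, one_mul]]
      exact hμsum j q i r
    have hlamr : ∀ j q i r, 0 < lam j q i r r := by
      intro j q i r
      have hterm : 0 < exp (δ • Lmat (α i)) r r * μ j q i r r :=
        mul_pos (hEdiag i r) (hμr j q i r)
      have hle : exp (δ • Lmat (α i)) r r * μ j q i r r ≤ ∑ u,
          exp (δ • Lmat (α i)) r u * μ j q i r u :=
        Finset.single_le_sum (f := fun u => exp (δ • Lmat (α i)) r u * μ j q i r u)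
          (fun u _ => mul_nonneg (hEnn i r u) (hμnn j q i r u)) (Finset.mem_univ r)
      rw [hlamval]
      linarith
    -- the weak quadratic form of condition 1
    have hq' : ∀ (iM : Fin N) r (v : Fin n → ℝ),
        (A iM *ᵥ v) ⬝ᵥ (P iM r) *ᵥ v + v ⬝ᵥ (P iM r) *ᵥ (A iM *ᵥ v)
          ≤ ∑ s ∈ Finset.univ.erase r,
              α iM r s * (v ⬝ᵥ (P iM s) *ᵥ v - v ⬝ᵥ (P iM r) *ᵥ v) := by
      intro iM r v
      have h0 := (h1 iM r).posSemidef.dotProduct_mulVec_nonneg v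
      rw [BMIAux.star_vec, Matrix.sub_mulVec, dotProduct_sub, quad_sum] at h0
      have e1 : ∀ s ∈ Finset.univ.erase r,
          α iM r s * (v ⬝ᵥ (P iM s - P iM r) *ᵥ v)
            = α iM r s * (v ⬝ᵥ (P iM s) *ᵥ v - v ⬝ᵥ (P iM r) *ᵥ v) := by
        intro s _
        rw [Matrix.sub_mulVec, dotProduct_sub]
      rw [Finset.sum_congr rfl e1, quad_lyap] at h0
      linarith
    refine ⟨by linarith, P, α, fun j q i r s => if s = r then 0 else lam j q i r s,
      hsym, hpd, hα, ?_, ?_, h1, ?_⟩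
    · intro j q i r s
      dsimp only
      by_cases h : s = r
      · rw [if_pos h]
      · rw [if_neg h]; exact hlamnn j q i r s
    · intro j q i r
      dsimp only
      rw [← Finset.add_sum_erase _ _ (Finset.mem_univ r), if_pos rfl, zero_add,
        Finset.sum_congr rfl fun s hs => if_neg (Finset.ne_of_mem_erase hs),
        Finset.sum_erase_eq_sub (Finset.mem_univ r), hlamsum j q i r]
      linarith [hlamr j q i r]
    · intro i j hij q r
      dsimp only
      -- identities for the two combinations
      have hold : P i r + ∑ s ∈ Finset.univ.erase r, γ j q i r s • (P i s - P i r)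
          = Qc (P i) (μ j q i r) := by
        rw [Finset.sum_congr rfl (fun s hs => by
          rw [show γ j q i r s = μ j q i r s from
            (hμo j q i r s (Finset.ne_of_mem_erase hs)).symm])]
        exact combo_eq (P i) (μ j q i r) (hμsum j q i r) r
      have hnew : P i r + ∑ s ∈ Finset.univ.erase r,
            (if s = r then 0 else lam j q i r s) • (P i s - P i r)
          = Qc (P i) (lam j q i r) := by
        rw [Finset.sum_congr rfl (fun s hs => by
          rw [if_neg (Finset.ne_of_mem_erase hs)])]
        exact combo_eq (P i) (lam j q i r) (hlamsum j q i r) r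
      rw [hnew]
      -- exponential splitting
      have hsplitA : exp ((τ + δ) • A i) = exp (τ • A i) * exp (δ • A i) := by
        rw [add_smul]
        exact Matrix.exp_add_of_commute _ _ (((Commute.refl (A i)).smul_left τ).smul_right δ)
      have hT : exp ((τ + δ) • (A i)ᵀ) = (exp ((τ + δ) • A i))ᵀ := by
        rw [← Matrix.transpose_smul, Matrix.exp_transpose]
      have hTτ : exp (τ • (A i)ᵀ) = (exp (τ • A i))ᵀ := by
        rw [← Matrix.transpose_smul, Matrix.exp_transpose]
      -- invertibility of exp (δ • A i) on vectors
      have hBx : ∀ x : Fin n → ℝ, x ≠ 0 → exp (δ • A i) *ᵥ x ≠ 0 := by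
        intro x hx hzero
        apply hx
        have hinv : exp (-(δ • A i)) * exp (δ • A i) = 1 := by
          rw [← Matrix.exp_add_of_commute _ _ ((Commute.refl (δ • A i)).neg_left),
            neg_add_cancel, exp_zero]
        have : exp (-(δ • A i)) *ᵥ (exp (δ • A i) *ᵥ x) = x := by
          rw [Matrix.mulVec_mulVec, hinv, Matrix.one_mulVec]
        rw [hzero, Matrix.mulVec_zero] at this
        exact this.symm
      -- old condition, rewritten
      have holdPD := h2 i j hij q r
      rw [hold] at holdPD
      refine Matrix.PosDef.of_dotProduct_mulVec_pos ?_ ?_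
      · -- Hermitian part
        refine Matrix.IsHermitian.sub (Qc_isHermitian (P i) (fun s => hsym i s) _) ?_
        rw [hT, ← Matrix.conjTranspose_eq_transpose_of_trivial]
        exact Matrix.isHermitian_conjTranspose_mul_mul _ (isHermitian_of_isSymm (hsym j q))
      · -- positivity of the quadratic form
        intro x hx
        rw [BMIAux.star_vec, Matrix.sub_mulVec, dotProduct_sub]
        rw [sub_pos]
        set yδ := exp (δ • A i) *ᵥ x with hyδdef
        have hyδ0 : yδ ≠ 0 := hBx x hx
        -- rewrite the exponential quadratic form
        have e3 : x ⬝ᵥ (exp ((τ + δ) • (A i)ᵀ) * P j q * exp ((τ + δ) • A i)) *ᵥ x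
            = (exp (τ • A i) *ᵥ yδ) ⬝ᵥ (P j q) *ᵥ (exp (τ • A i) *ᵥ yδ) := by
          rw [hT, quad_conj, hsplitA, ← Matrix.mulVec_mulVec]
        -- the strict inequality at dwell time τ, evaluated at yδ
        have hstrict := holdPD.dotProduct_mulVec_pos hyδ0
        rw [BMIAux.star_vec, Matrix.sub_mulVec, dotProduct_sub, sub_pos, hTτ, quad_conj] at hstrict
        -- the flow monotonicity
        have hflow := flow_quad_le (A i) (P i) (α i) (fun r' s' => le_of_lt (hα i r' s'))
          (hq' i) hδ (μ j q i r) (hμnn j q i r) x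
        rw [e3]
        calc (exp (τ • A i) *ᵥ yδ) ⬝ᵥ (P j q) *ᵥ (exp (τ • A i) *ᵥ yδ)
            < yδ ⬝ᵥ Qc (P i) (μ j q i r) *ᵥ yδ := hstrict
          _ ≤ x ⬝ᵥ Qc (P i) (lam j q i r) *ᵥ x := hflow
  -- Part (tauBound monotone)
  have hmono : ∀ m : ℕ, 0 < m → tauBound A (m + 1) ≤ tauBound A m := by
    intro m hm
    exact sInf_le_sInf (Set.image_mono (partA m hm))
  have hlb : ∀ m : ℕ, (0 : EReal) ≤ tauBound A m := by
    intro m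
    refine le_sInf ?_
    rintro b ⟨τ, hτ, rfl⟩
    show (0 : EReal) ≤ (τ : EReal)
    exact_mod_cast hτ.1
  refine ⟨partA, hmono, partB, fun _ => ⟨fun m _ => hlb m, ?_⟩⟩
  have hanti : Antitone (fun k : ℕ => tauBound A (k + 1)) :=
    antitone_nat_of_succ_le fun k => hmono (k + 1) (Nat.succ_pos k)
  refine ⟨⨅ k : ℕ, tauBound A (k + 1), ?_⟩
  have h := tendsto_atTop_iInf hanti
  exact (Filter.tendsto_add_atTop_iff_nat 1).1 h
end
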